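/- arXiv:1112.2855 — 3 statements merged into one kernel-verified Lean document; each statement's English description precedes it below -/
import Mathlib

section
/- Let T ∈ G_γ^d, where the sequence γ is strictly positive, non-increasing with limit zero, summable, and γ_1 = 1. Then sup_{m∈ℕ} { γ_m · ‖[T]_m^{−1}‖ } ≤ 4d³, where ‖·‖ denotes the spectral norm; in particular each Galerkin matrix [T]_m is invertible. -/
set_option maxHeartbeats 2000000
set_option synthInstance.maxHeartbeats 400000


open scoped RealInnerProductSpace Classical ENNReal NNReal
open Matrix MeasureTheory

noncomputable section

variable {H : Type} [NormedAddCommGroup H] [InnerProductSpace ℝ H] [CompleteSpace H]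

/-- Spectral norm of a real matrix (largest singular value). -/
def specNorm {m : ℕ} (A : Matrix (Fin m) (Fin m) ℝ) : ℝ :=
  ‖Matrix.toEuclideanCLM (𝕜 := ℝ) A‖

/-- Galerkin matrix `[T]_m = (⟪ψ_j, T ψ_k⟫)_{1≤j,k≤m}` (0-indexed). -/
def opMat (ψ : HilbertBasis ℕ ℝ H) (T : H →L[ℝ] H) (m : ℕ) :
    Matrix (Fin m) (Fin m) ℝ :=
  Matrix.of fun j k => ⟪ψ (j : ℕ), T (ψ (k : ℕ))⟫

/-- The ellipsoid `F_β^r`. -/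
def memF (ψ : HilbertBasis ℕ ℝ H) (β : ℕ → ℝ) (r : ℝ) (h : H) : Prop :=
  Summable (fun j => β j * ⟪h, ψ j⟫ ^ 2) ∧ (∑' j, β j * ⟪h, ψ j⟫ ^ 2) ≤ r

/-- The class `G_γ^d` of strictly positive nuclear operators with sandwiched norm. -/
def memG (ψ : HilbertBasis ℕ ℝ H) (γ : ℕ → ℝ) (d : ℝ) (T : H →L[ℝ] H) : Prop :=
  (∀ x y : H, ⟪T x, y⟫ = ⟪x, T y⟫) ∧ (∀ h : H, h ≠ 0 → 0 < ⟪T h, h⟫) ∧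
    Summable (fun j => ⟪T (ψ j), ψ j⟫) ∧
    ∀ h : H,
      (d ^ 2)⁻¹ * (∑' j, γ j ^ 2 * ⟪h, ψ j⟫ ^ 2) ≤ ‖T h‖ ^ 2 ∧
      ‖T h‖ ^ 2 ≤ d ^ 2 * (∑' j, γ j ^ 2 * ⟪h, ψ j⟫ ^ 2)

/-- Coefficient vector `[g]_m` of `g = Γ φ`. -/
def gvec (ψ : HilbertBasis ℕ ℝ H) (Γ : H →L[ℝ] H) (φ : H) (m : ℕ) : Fin m → ℝ :=
  fun j => ⟪Γ φ, ψ (j : ℕ)⟫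

/-- Coefficients `[Γ]_m⁻¹ [g]_m` of the Galerkin solution. -/
def galCoef (ψ : HilbertBasis ℕ ℝ H) (Γ : H →L[ℝ] H) (φ : H) (m : ℕ) : Fin m → ℝ :=
  (opMat ψ Γ m)⁻¹ *ᵥ gvec ψ Γ φ m

/-- The Galerkin solution `φ_m`. -/
def galerkin (ψ : HilbertBasis ℕ ℝ H) (Γ : H →L[ℝ] H) (φ : H) (m : ℕ) : H :=
  ∑ j : Fin m, galCoef ψ Γ φ m j • (ψ (j : ℕ))

/-- The linear functional `ℓ(h) = Σ_j ℓ_j ⟨h, ψ_j⟩`. -/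
def ellOf (ψ : HilbertBasis ℕ ℝ H) (lc : ℕ → ℝ) (h : H) : ℝ := ∑' j, lc j * ⟪h, ψ j⟫

/-- `[ℓ]_m`. -/
def ellvec (lc : ℕ → ℝ) (m : ℕ) : Fin m → ℝ := fun j => lc (j : ℕ)

/-- Weighted (squared) norm `‖h‖_w²`. -/
def wnorm2 (ψ : HilbertBasis ℕ ℝ H) (w : ℕ → ℝ) (h : H) : ℝ := ∑' j, w j * ⟪h, ψ j⟫ ^ 2

/-- `V_m^γ = Σ_{j=1}^m ℓ_j²/γ_j`. -/
def Vgam (lc γ : ℕ → ℝ) (m : ℕ) : ℝ := ∑ j ∈ Finset.range m, lc j ^ 2 / γ j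

/-- `V_m = max_{1≤k≤m} [ℓ]_k^t [Γ]_k⁻¹ [ℓ]_k`. -/
def Vmax (ψ : HilbertBasis ℕ ℝ H) (lc : ℕ → ℝ) (Γ : H →L[ℝ] H) (m : ℕ) : ℝ :=
  ⨆ k : Fin m, ellvec lc (k + 1) ⬝ᵥ ((opMat ψ Γ (k + 1))⁻¹ *ᵥ ellvec lc (k + 1))

/-- `σ_m² = 2(σ_Y² + [g]_m^t [Γ]_m⁻¹ [g]_m)` with `σ_Y² = σ² + ⟨Γφ,φ⟩`. -/
def sigmaSqm (ψ : HilbertBasis ℕ ℝ H) (Γ : H →L[ℝ] H) (φ : H) (σ : ℝ) (m : ℕ) : ℝ :=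
  2 * ((σ ^ 2 + ⟪Γ φ, φ⟫) + gvec ψ Γ φ m ⬝ᵥ ((opMat ψ Γ m)⁻¹ *ᵥ gvec ψ Γ φ m))

/-- Theoretical penalty `p_m = 100 σ_m² V_m (1 + log n)/n`. -/
def penTheo (ψ : HilbertBasis ℕ ℝ H) (lc : ℕ → ℝ) (Γ : H →L[ℝ] H) (φ : H) (σ : ℝ)
    (n m : ℕ) : ℝ :=
  100 * sigmaSqm ψ Γ φ σ m * Vmax ψ lc Γ m * ((1 + Real.log n) / n)

/-- `R_m^ℓ[x]` (here `m ≥ 1`; 0-indexed sequences, so `γ_m` is `γ (m-1)`). -/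
def Rml (lc β γ : ℕ → ℝ) (x : ℝ) (m : ℕ) : ℝ :=
  max (∑' j, if m ≤ j then lc j ^ 2 / β j else 0)
    (max (γ (m - 1) / β (m - 1)) x * ∑ j ∈ Finset.range m, lc j ^ 2 / γ j)

/-- `R_*^ℓ[x] = min_{m ≥ 1} R_m^ℓ[x]`. -/
def Rstar (lc β γ : ℕ → ℝ) (x : ℝ) : ℝ := ⨅ m : ℕ, Rml lc β γ x (m + 1)

variable {Ω : Type}

/-- Empirical covariance matrix `[Γ̂]_m`. -/
def hatGam (ψ : HilbertBasis ℕ ℝ H) (n : ℕ) (X : Fin n → Ω → H) (m : ℕ) (ω : Ω) :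
    Matrix (Fin m) (Fin m) ℝ :=
  Matrix.of fun j k => (n : ℝ)⁻¹ * ∑ i, ⟪X i ω, ψ (j : ℕ)⟫ * ⟪X i ω, ψ (k : ℕ)⟫

/-- Empirical vector `[ĝ]_m`. -/
def hatgv (ψ : HilbertBasis ℕ ℝ H) (n : ℕ) (X : Fin n → Ω → H) (Y : Fin n → Ω → ℝ)
    (m : ℕ) (ω : Ω) : Fin m → ℝ :=
  fun j => (n : ℝ)⁻¹ * ∑ i, Y i ω * ⟪X i ω, ψ (j : ℕ)⟫

/-- The thresholded plug-in estimator `ℓ̂_m = ℓ(φ̂_m)`. -/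
def hatell (ψ : HilbertBasis ℕ ℝ H) (lc : ℕ → ℝ) (n : ℕ) (X : Fin n → Ω → H)
    (Y : Fin n → Ω → ℝ) (m : ℕ) (ω : Ω) : ℝ :=
  if IsUnit (hatGam ψ n X m ω).det ∧ specNorm (hatGam ψ n X m ω)⁻¹ ≤ (n : ℝ) then
    ellvec lc m ⬝ᵥ ((hatGam ψ n X m ω)⁻¹ *ᵥ hatgv ψ n X Y m ω)
  else 0

/-- `M_n^ℓ`. -/
def Mln (lc : ℕ → ℝ) (n : ℕ) : ℕ :=
  sSup {m | 1 ≤ m ∧ (m : ℝ) ≤ (n : ℝ) ^ ((1 : ℝ) / 4) ∧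
    (∑ j ∈ Finset.range m, lc j ^ 2) ≤ (n : ℝ)}

/-- Spectral norm of the inverse, `+∞` if singular. -/
def invNormE {m : ℕ} (A : Matrix (Fin m) (Fin m) ℝ) : ℝ≥0∞ :=
  if IsUnit A.det then ENNReal.ofReal (specNorm A⁻¹) else ⊤

/-- Random upper bound `M̂_n`. -/
def Mhat (ψ : HilbertBasis ℕ ℝ H) (lc : ℕ → ℝ) (n : ℕ) (X : Fin n → Ω → H) (ω : Ω) : ℕ :=
  let S := {m | 2 ≤ m ∧ m ≤ Mln lc n ∧
    ENNReal.ofReal ((n : ℝ) / (1 + Real.log n)) <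
      invNormE (hatGam ψ n X m ω) * ENNReal.ofReal (∑ j ∈ Finset.range m, lc j ^ 2)}
  if S.Nonempty then sInf S - 1 else Mln lc n

/-- Deterministic `M_n(a)` (with `a_m = a (m-1)` in 0-indexing). -/
def Mna (lc a : ℕ → ℝ) (n : ℕ) : ℕ :=
  let S := {m | 2 ≤ m ∧ m ≤ Mln lc n ∧
    (n : ℝ) / (1 + Real.log n) < a (m - 1) * ∑ j ∈ Finset.range m, lc j ^ 2}
  if S.Nonempty then sInf S - 1 else Mln lc n

/-- `V̂_m = max_{1≤k≤m} [ℓ]_k^t [Γ̂]_k⁻¹ [ℓ]_k`. -/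
def hatVmax (ψ : HilbertBasis ℕ ℝ H) (lc : ℕ → ℝ) (n : ℕ) (X : Fin n → Ω → H)
    (m : ℕ) (ω : Ω) : ℝ :=
  ⨆ k : Fin m, ellvec lc (k + 1) ⬝ᵥ ((hatGam ψ n X (k + 1) ω)⁻¹ *ᵥ ellvec lc (k + 1))

/-- Stochastic penalty `p̂_m`. -/
def hatpen (ψ : HilbertBasis ℕ ℝ H) (lc : ℕ → ℝ) (n : ℕ) (X : Fin n → Ω → H)
    (Y : Fin n → Ω → ℝ) (m : ℕ) (ω : Ω) : ℝ :=
  700 * (2 * (n : ℝ)⁻¹ * ∑ i, (Y i ω) ^ 2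
      + 2 * (hatgv ψ n X Y m ω ⬝ᵥ ((hatGam ψ n X m ω)⁻¹ *ᵥ hatgv ψ n X Y m ω)))
    * hatVmax ψ lc n X m ω * ((1 + Real.log n) / n)

/-- Contrast `κ_m`. -/
def contrast (ψ : HilbertBasis ℕ ℝ H) (lc : ℕ → ℝ) (n : ℕ) (X : Fin n → Ω → H)
    (Y : Fin n → Ω → ℝ) (m : ℕ) (ω : Ω) : ℝ :=
  sSup {x | ∃ k, m ≤ k ∧ k ≤ Mhat ψ lc n X ω ∧
    x = (hatell ψ lc n X Y k ω - hatell ψ lc n X Y m ω) ^ 2 - hatpen ψ lc n X Y k ω}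

/-- The fully data-driven dimension `m̂` (smallest minimizer of `κ + p̂`). -/
def mhat (ψ : HilbertBasis ℕ ℝ H) (lc : ℕ → ℝ) (n : ℕ) (X : Fin n → Ω → H)
    (Y : Fin n → Ω → ℝ) (ω : Ω) : ℕ :=
  sInf {m | 1 ≤ m ∧ m ≤ Mhat ψ lc n X ω ∧ ∀ k, 1 ≤ k → k ≤ Mhat ψ lc n X ω →
    contrast ψ lc n X Y m ω + hatpen ψ lc n X Y m ω ≤
      contrast ψ lc n X Y k ω + hatpen ψ lc n X Y k ω}

/-- The functional linear model with jointly Gaussian regressor and error,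
observed through an i.i.d. sample of size `n`. -/
structure FLModel [MeasurableSpace H] (ψ : HilbertBasis ℕ ℝ H)
    (σ : ℝ) (φ : H) (Γ : H →L[ℝ] H)
    [MeasurableSpace Ω] (P : Measure Ω) (n : ℕ)
    (X : Fin n → Ω → H) (Y : Fin n → Ω → ℝ) (ε : Fin n → Ω → ℝ) : Prop where
  measX : ∀ i, Measurable (X i)
  measEps : ∀ i, Measurable (ε i)
  modelEq : ∀ i ω, Y i ω = ⟪φ, X i ω⟫ + σ * ε i ω
  indep : ProbabilityTheory.iIndepFun (fun i ω => (X i ω, ε i ω)) P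
  identDistrib : ∀ i j, Measure.map (fun ω => (X i ω, ε i ω)) P
      = Measure.map (fun ω => (X j ω, ε j ω)) P
  centeredX : ∀ i (h : H), ∫ ω, ⟪X i ω, h⟫ ∂P = 0
  sqIntX : ∀ i, Integrable (fun ω => ‖X i ω‖ ^ 2) P
  epsMean : ∀ i, ∫ ω, ε i ω ∂P = 0
  epsVar : ∀ i, ∫ ω, (ε i ω) ^ 2 ∂P = 1
  uncorr : ∀ i (h : H), ∫ ω, ε i ω * ⟪X i ω, h⟫ ∂P = 0
  gaussian : ∀ i (k : ℕ) (hs : Fin k → H) (c : Fin k → ℝ) (c' : ℝ), ∃ v : NNReal,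
      Measure.map (fun ω => (∑ j, c j * ⟪X i ω, hs j⟫) + c' * ε i ω) P
        = ProbabilityTheory.gaussianReal 0 v
  covOp : ∀ i (h h' : H), ⟪Γ h, h'⟫ = ∫ ω, ⟪X i ω, h⟫ * ⟪X i ω, h'⟫ ∂P

/-- Cauchy–Schwarz for the positive symmetric form `⟪T·,·⟫`. -/
lemma form_cs (T : H →L[ℝ] H) (hsym : ∀ x y : H, ⟪T x, y⟫ = ⟪x, T y⟫)
    (hpos : ∀ h : H, h ≠ 0 → 0 < ⟪T h, h⟫) (u x : H) :
    ⟪T u, x⟫ ^ 2 ≤ ⟪T u, u⟫ * ⟪T x, x⟫ := by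
  have hq : ∀ g : H, 0 ≤ ⟪T g, g⟫ := by
    intro g
    rcases eq_or_ne g 0 with h | h
    · simp [h]
    · exact (hpos g h).le
  have key : ∀ r : ℝ, 0 ≤ ⟪T u, u⟫ * (r * r) + (2 * ⟪T u, x⟫) * r + ⟪T x, x⟫ := by
    intro r
    have h0 := hq (x + r • u)
    have hTx : T (x + r • u) = T x + r • T u := by simp
    rw [hTx] at h0
    have h2 : ⟪T x, u⟫ = ⟪T u, x⟫ := by
      rw [hsym x u, real_inner_comm]
    have h1 : ⟪T x + r • T u, x + r • u⟫
        = ⟪T x, x⟫ + r * ⟪T u, x⟫ + r * ⟪T u, x⟫ + r * r * ⟪T u, u⟫ := by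
      simp only [inner_add_left, inner_add_right, real_inner_smul_left, real_inner_smul_right]
      rw [h2]; ring
    rw [h1] at h0
    linarith
  have hdisc := discrim_le_zero key
  rw [discrim] at hdisc
  nlinarith [hdisc]

/-- Final arithmetic step, isolated with a small context. -/
lemma arith_final (d g X P Q R β : ℝ) (hd : 1 ≤ d) (hg : 0 < g) (hX : 0 < X)
    (hβ : β = 3 * (g ^ 2 / (2 * d ^ 2)))
    (hP : 0 < P) (hQ : 0 ≤ Q) (hR : 2 / 3 * X ≤ R) (hR0 : 0 ≤ R)
    (hCS : R ^ 2 ≤ P * Q) (hPb : P ^ 2 ≤ 4 * (X * (X / β))) :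
    g / (4 * d ^ 3) * X ≤ Q := by
  have hd0 : (0:ℝ) < d := lt_of_lt_of_le one_pos hd
  have hβ0 : 0 < β := by rw [hβ]; positivity
  set sb := Real.sqrt β with hsbdef
  have hsb : 0 < sb := Real.sqrt_pos.mpr hβ0
  have hsb2 : sb ^ 2 = β := Real.sq_sqrt hβ0.le
  have hPs : P * sb ≤ 2 * X := by
    have h1 : (P * sb) ^ 2 ≤ (2 * X) ^ 2 := by
      rw [mul_pow, hsb2]
      have e1 : 4 * (X * (X / β)) * β = (2 * X) ^ 2 := by
        field_simp
        ring
      nlinarith [mul_le_mul_of_nonneg_right hPb hβ0.le]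
    nlinarith [mul_pos hP hsb, hX]
  have h5 : 4 / 9 * X ^ 2 ≤ P * Q := by nlinarith [hCS, hR, hR0, hX]
  have h7 : 4 / 9 * X ^ 2 * sb ≤ 2 * X * Q := by
    nlinarith [mul_le_mul_of_nonneg_right h5 hsb.le, mul_le_mul_of_nonneg_right hPs hQ]
  have h8 : 2 / 9 * X * sb ≤ Q := by nlinarith [h7, hX, hsb]
  have hsg : 9 * g ≤ 8 * d ^ 3 * sb := by
    have hd2 : 1 ≤ d ^ 2 := by nlinarith
    have hd4 : 1 ≤ d ^ 4 := by nlinarith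
    have hd26 : d ^ 2 ≤ d ^ 6 := by
      nlinarith [mul_le_mul_of_nonneg_left hd4 (by positivity : (0:ℝ) ≤ d ^ 2)]
    have hβmul : β * (2 * d ^ 2) = 3 * g ^ 2 := by
      rw [hβ]
      field_simp
    have h1 : (9 * g) ^ 2 ≤ (8 * d ^ 3 * sb) ^ 2 := by
      have e : (8 * d ^ 3 * sb) ^ 2 = 64 * d ^ 6 * β := by rw [mul_pow, hsb2]; ring
      rw [e]
      nlinarith [hβmul, mul_le_mul_of_nonneg_left hd26 hβ0.le, mul_pos hβ0 (pow_pos hd0 6)]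
    nlinarith [hg, mul_pos (mul_pos (show (0:ℝ) < 8 by norm_num) (pow_pos hd0 3)) hsb]
  have hfin : g / (4 * d ^ 3) * X ≤ 2 / 9 * X * sb := by
    rw [div_mul_eq_mul_div, div_le_iff₀ (by positivity : (0:ℝ) < 4 * d ^ 3)]
    nlinarith [mul_le_mul_of_nonneg_right hsg hX.le]
  linarith

/-- Key coercivity estimate. -/
lemma key_coercive (ψ : HilbertBasis ℕ ℝ H) (γ : ℕ → ℝ) (d : ℝ) (hd : 1 ≤ d)
    (hγ1 : γ 0 = 1) (hγpos : ∀ j, 0 < γ j) (hγanti : Antitone γ)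
    (T : H →L[ℝ] H) (hT : memG ψ γ d T) (m : ℕ) (hm : 1 ≤ m)
    (x : H) (hx : ∀ j : ℕ, m ≤ j → ⟪x, ψ j⟫ = 0) :
    γ (m - 1) / (4 * d ^ 3) * ‖x‖ ^ 2 ≤ ⟪T x, x⟫ := by
  obtain ⟨hsym, hpos, _, hbd⟩ := hT
  have hd0 : (0:ℝ) < d := lt_of_lt_of_le one_pos hd
  rcases eq_or_ne x 0 with rfl | hx0
  · simp
  have hq : ∀ g : H, 0 ≤ ⟪T g, g⟫ := by
    intro g
    rcases eq_or_ne g 0 with h | h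
    · simp [h]
    · exact (hpos g h).le
  set g := γ (m - 1) with hgdef
  have hg : 0 < g := hγpos _
  set t : ℝ := g ^ 2 / (2 * d ^ 2) with htdef
  have ht : 0 < t := by positivity
  set β : ℝ := 3 * t with hβdef
  have hβ : 0 < β := by positivity
  set A : H →L[ℝ] H := T * T + t • (1 : H →L[ℝ] H) with hAdef
  have hAapp : ∀ h : H, A h = T (T h) + t • h := by
    intro h
    rw [hAdef]
    simp only [ContinuousLinearMap.add_apply, ContinuousLinearMap.coe_smul', Pi.smul_apply,
      ContinuousLinearMap.one_apply, ContinuousLinearMap.mul_apply]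
  have hAform : ∀ h : H, ⟪A h, h⟫ = ‖T h‖ ^ 2 + t * ‖h‖ ^ 2 := by
    intro h
    rw [hAapp, inner_add_left, real_inner_smul_left, hsym (T h) h,
      real_inner_self_eq_norm_sq, real_inner_self_eq_norm_sq]
  -- invertibility of A
  set K : ℝ := (‖T‖ + 1) ^ 2 with hKdef
  have hK : 0 < K := by positivity
  have hB : ‖K • (1 : H →L[ℝ] H) - T * T‖ ≤ K := by
    apply ContinuousLinearMap.opNorm_le_bound _ hK.le
    intro h
    have e1 : (K • (1 : H →L[ℝ] H) - T * T) h = K • h - T (T h) := by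
      simp [ContinuousLinearMap.mul_apply]
    rw [e1]
    have e2 : ‖K • h - T (T h)‖ ^ 2 = ‖K • h‖ ^ 2 - 2 * ⟪K • h, T (T h)⟫ + ‖T (T h)‖ ^ 2 :=
      norm_sub_sq_real _ _
    have e3 : ⟪K • h, T (T h)⟫ = K * ‖T h‖ ^ 2 := by
      rw [real_inner_smul_left, real_inner_comm, hsym (T h) h, real_inner_self_eq_norm_sq]
    have e4 : ‖T (T h)‖ ≤ ‖T‖ * ‖T h‖ := T.le_opNorm _
    have e5 : ‖K • h‖ = K * ‖h‖ := by
      rw [norm_smul, Real.norm_eq_abs, abs_of_pos hK]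
    have e7 : ‖T (T h)‖ ^ 2 ≤ K * ‖T h‖ ^ 2 := by
      have h1 : ‖T‖ ^ 2 ≤ K := by nlinarith [norm_nonneg T]
      have h2 : ‖T (T h)‖ ^ 2 ≤ ‖T‖ ^ 2 * ‖T h‖ ^ 2 := by
        nlinarith [e4, norm_nonneg (T (T h)), norm_nonneg (T h), norm_nonneg T]
      nlinarith [sq_nonneg (‖T h‖)]
    have e8 : ‖K • h - T (T h)‖ ^ 2 ≤ (K * ‖h‖) ^ 2 := by
      rw [e2, e3, e5]
      nlinarith [sq_nonneg (‖T h‖), hK]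
    exact le_of_pow_le_pow_left₀ (two_ne_zero) (by positivity : (0:ℝ) ≤ K * ‖h‖) e8
  set s : ℝ := K + t with hsdef
  have hs0 : 0 < s := by positivity
  have h1eq : (1 : H →L[ℝ] H) - s⁻¹ • A = s⁻¹ • (K • (1 : H →L[ℝ] H) - T * T) := by
    rw [hAdef, hsdef]
    rw [smul_sub, smul_smul, smul_add]
    have : (K + t)⁻¹ * K = 1 - (K + t)⁻¹ * t := by
      field_simp
      ring
    rw [this]
    rw [sub_smul, one_smul, smul_smul]
    abel
  have hnorm : ‖(1 : H →L[ℝ] H) - s⁻¹ • A‖ < 1 := by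
    rw [h1eq, norm_smul s⁻¹ (K • (1 : H →L[ℝ] H) - T * T), Real.norm_eq_abs,
      abs_of_pos (by positivity)]
    calc s⁻¹ * ‖K • (1 : H →L[ℝ] H) - T * T‖ ≤ s⁻¹ * K := by
          exact mul_le_mul_of_nonneg_left hB (by positivity)
      _ < 1 := by
          rw [inv_mul_lt_iff₀ hs0, mul_one]
          linarith
  have hu1 : IsUnit (s⁻¹ • A) := by
    refine ⟨Units.oneSub _ hnorm, ?_⟩
    show (1 : H →L[ℝ] H) - ((1 : H →L[ℝ] H) - s⁻¹ • A) = s⁻¹ • A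
    abel
  have huA : IsUnit A := by
    have hAe : A = (s • (1 : H →L[ℝ] H)) * (s⁻¹ • A) := by
      rw [smul_mul_assoc, one_mul, smul_smul, mul_inv_cancel₀ hs0.ne', one_smul]
    rw [hAe]
    refine IsUnit.mul ?_ hu1
    refine ⟨⟨s • 1, s⁻¹ • 1, ?_, ?_⟩, rfl⟩
    · rw [smul_mul_assoc, one_mul, smul_smul, mul_inv_cancel₀ hs0.ne', one_smul]
    · rw [smul_mul_assoc, one_mul, smul_smul, inv_mul_cancel₀ hs0.ne', one_smul]
  obtain ⟨e, he⟩ := huA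
  set N : H →L[ℝ] H := ((e⁻¹ : (H →L[ℝ] H)ˣ) : H →L[ℝ] H) with hNdef
  set y : H := N x with hydef
  have hAy : A y = x := by
    have h1 : A * N = 1 := by rw [← he, hNdef]; exact e.mul_inv
    have h2 : (A * N) x = A (N x) := rfl
    rw [h1] at h2
    rw [hydef]
    rw [← h2]
    rfl
  have hTTy : T (T y) = x - t • y := by
    have h0 := hAy
    rw [hAapp] at h0
    exact eq_sub_of_add_eq h0
  have hxy_eq : ⟪x, y⟫ = ‖T y‖ ^ 2 + t * ‖y‖ ^ 2 := by
    rw [← hAy]; exact hAform y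
  have hyx : t * ‖y‖ ≤ ‖x‖ := by
    have h2 : t * ‖y‖ ^ 2 ≤ ⟪x, y⟫ := by
      rw [hxy_eq]; nlinarith [sq_nonneg ‖T y‖]
    have h3 : ⟪x, y⟫ ≤ ‖x‖ * ‖y‖ := real_inner_le_norm x y
    rcases eq_or_lt_of_le (norm_nonneg y) with hy0 | hy0
    · rw [← hy0]; simpa using norm_nonneg x
    · nlinarith
  -- the tsum estimate : ⟪x, y⟫ ≤ ‖x‖² / β
  have hψsum : ∀ u v : H, HasSum (fun j => ⟪u, ψ j⟫ * ⟪v, ψ j⟫) ⟪u, v⟫ := by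
    intro u v
    have h := ψ.hasSum_inner_mul_inner u v
    have heq : ∀ j : ℕ, ⟪u, ψ j⟫ * ⟪ψ j, v⟫ = ⟪u, ψ j⟫ * ⟪v, ψ j⟫ := by
      intro j; rw [real_inner_comm (ψ j) v]
    exact h.congr_fun fun j => (heq j).symm
  have hxs : HasSum (fun j => ⟪x, ψ j⟫ ^ 2) (‖x‖ ^ 2) := by
    have h := hψsum x x
    rw [real_inner_self_eq_norm_sq] at h
    have heq : ∀ j : ℕ, ⟪x, ψ j⟫ * ⟪x, ψ j⟫ = ⟪x, ψ j⟫ ^ 2 := fun j => (sq _).symm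
    exact h.congr_fun fun j => (heq j).symm
  have hys : HasSum (fun j => ⟪y, ψ j⟫ ^ 2) (‖y‖ ^ 2) := by
    have h := hψsum y y
    rw [real_inner_self_eq_norm_sq] at h
    have heq : ∀ j : ℕ, ⟪y, ψ j⟫ * ⟪y, ψ j⟫ = ⟪y, ψ j⟫ ^ 2 := fun j => (sq _).symm
    exact h.congr_fun fun j => (heq j).symm
  have hxys : HasSum (fun j => ⟪x, ψ j⟫ * ⟪y, ψ j⟫) ⟪x, y⟫ := hψsum x y
  have hγy_sum : Summable (fun j => γ j ^ 2 * ⟪y, ψ j⟫ ^ 2) := by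
    apply Summable.of_nonneg_of_le (fun j => by positivity) (fun j => ?_) hys.summable
    have h1 : γ j ≤ 1 := by rw [← hγ1]; exact hγanti (Nat.zero_le j)
    have h2 := hγpos j
    exact mul_le_of_le_one_left (sq_nonneg _) (by nlinarith)
  set b : ℕ → ℝ := fun j => (d ^ 2)⁻¹ * γ j ^ 2 + t with hbdef
  have hb_pos : ∀ j, 0 < b j := fun j => by
    have := hγpos j
    have : 0 < γ j ^ 2 := by positivity
    positivity
  have hb_sum : Summable (fun j => b j * ⟪y, ψ j⟫ ^ 2) := by
    have he : (fun j => b j * ⟪y, ψ j⟫ ^ 2)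
        = fun j => (d ^ 2)⁻¹ * (γ j ^ 2 * ⟪y, ψ j⟫ ^ 2) + t * ⟪y, ψ j⟫ ^ 2 := by
      funext j; rw [hbdef]; ring
    rw [he]
    exact (hγy_sum.mul_left _).add (hys.summable.mul_left t)
  have hbsum_le : ∑' j, b j * ⟪y, ψ j⟫ ^ 2 ≤ ⟪x, y⟫ := by
    have e0 : (fun j => b j * ⟪y, ψ j⟫ ^ 2)
        = fun j => (d ^ 2)⁻¹ * (γ j ^ 2 * ⟪y, ψ j⟫ ^ 2) + t * ⟪y, ψ j⟫ ^ 2 := by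
      funext j; rw [hbdef]; ring
    rw [e0, Summable.tsum_add (hγy_sum.mul_left _) (hys.summable.mul_left t),
      tsum_mul_left, tsum_mul_left, hys.tsum_eq]
    have h1 := (hbd y).1
    rw [hxy_eq]
    linarith
  have hβb : ∀ j, j < m → β ≤ b j := by
    intro j hj
    have h1 : g ≤ γ j := hγanti (Nat.le_pred_of_lt hj)
    have h2 : (d ^ 2)⁻¹ * g ^ 2 = 2 * t := by
      rw [htdef]; field_simp
    have h3 : 2 * t ≤ (d ^ 2)⁻¹ * γ j ^ 2 := by
      rw [← h2]
      have hsq : g ^ 2 ≤ γ j ^ 2 := by nlinarith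
      have hdinv : (0:ℝ) < (d ^ 2)⁻¹ := by positivity
      nlinarith
    rw [hbdef, hβdef]
    simp only
    linarith
  have hxyβ : ⟪x, y⟫ ≤ ‖x‖ ^ 2 / β := by
    have hterm : ∀ j, 2 * (⟪x, ψ j⟫ * ⟪y, ψ j⟫) - b j * ⟪y, ψ j⟫ ^ 2 ≤ ⟪x, ψ j⟫ ^ 2 / β := by
      intro j
      by_cases hj : j < m
      · have hbj := hβb j hj
        have h1 : 2 * (⟪x, ψ j⟫ * ⟪y, ψ j⟫) - b j * ⟪y, ψ j⟫ ^ 2 ≤ ⟪x, ψ j⟫ ^ 2 / b j := by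
          rw [le_div_iff₀ (hb_pos j)]
          nlinarith [sq_nonneg (⟪x, ψ j⟫ - b j * ⟪y, ψ j⟫)]
        have h2 : ⟪x, ψ j⟫ ^ 2 / b j ≤ ⟪x, ψ j⟫ ^ 2 / β :=
          div_le_div_of_nonneg_left (sq_nonneg _) hβ hbj
        linarith
      · have hxj : ⟪x, ψ j⟫ = 0 := hx j (le_of_not_gt hj)
        rw [hxj]
        have hb := hb_pos j
        have hy2 := sq_nonneg (⟪y, ψ j⟫ : ℝ)
        have hz : (0:ℝ) ^ 2 / β = 0 := by simp
        rw [hz]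
        nlinarith
    have hsum_lhs : Summable (fun j => 2 * (⟪x, ψ j⟫ * ⟪y, ψ j⟫) - b j * ⟪y, ψ j⟫ ^ 2) :=
      (hxys.summable.mul_left 2).sub hb_sum
    have hsum_rhs : Summable (fun j => ⟪x, ψ j⟫ ^ 2 / β) := hxs.summable.div_const β
    have hts := hsum_lhs.tsum_le_tsum hterm hsum_rhs
    have e1 : ∑' j, (2 * (⟪x, ψ j⟫ * ⟪y, ψ j⟫) - b j * ⟪y, ψ j⟫ ^ 2)
        = 2 * ⟪x, y⟫ - ∑' j, b j * ⟪y, ψ j⟫ ^ 2 := by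
      rw [Summable.tsum_sub (hxys.summable.mul_left 2) hb_sum, tsum_mul_left, hxys.tsum_eq]
    have e2 : ∑' j, ⟪x, ψ j⟫ ^ 2 / β = ‖x‖ ^ 2 / β := by
      rw [tsum_div_const, hxs.tsum_eq]
    rw [e1, e2] at hts
    linarith
  -- now the main chain
  set u : H := T y with hudef
  have hTu : T u = x - t • y := hTTy
  have hTu_norm : ‖T u‖ ≤ 2 * ‖x‖ := by
    rw [hTu]
    calc ‖x - t • y‖ ≤ ‖x‖ + ‖t • y‖ := norm_sub_le _ _
      _ = ‖x‖ + t * ‖y‖ := by rw [norm_smul, Real.norm_eq_abs, abs_of_pos ht]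
      _ ≤ 2 * ‖x‖ := by linarith
  have hu_norm : ‖u‖ ^ 2 ≤ ‖x‖ ^ 2 / β := by
    have h1 : ‖u‖ ^ 2 = ⟪T (T y), y⟫ := by
      rw [hsym (T y) y, ← real_inner_self_eq_norm_sq]
    rw [h1, hTTy, inner_sub_left, real_inner_smul_left, real_inner_self_eq_norm_sq]
    nlinarith [sq_nonneg ‖y‖, hxyβ]
  have hTux : 2 / 3 * ‖x‖ ^ 2 ≤ ⟪T u, x⟫ := by
    rw [hTu, inner_sub_left, real_inner_smul_left, real_inner_self_eq_norm_sq]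
    have hyx2 : ⟪y, x⟫ ≤ ‖x‖ ^ 2 / β := le_of_eq_of_le (real_inner_comm x y) hxyβ
    have h1 : t * ⟪y, x⟫ ≤ t * (‖x‖ ^ 2 / β) := mul_le_mul_of_nonneg_left hyx2 ht.le
    have h2 : t * (‖x‖ ^ 2 / β) = ‖x‖ ^ 2 / 3 := by
      rw [hβdef]
      have h3t : t / (3 * t) = 1 / 3 := by
        rw [mul_comm, ← div_div, div_self ht.ne']
      calc t * (‖x‖ ^ 2 / (3 * t)) = ‖x‖ ^ 2 * (t / (3 * t)) := by ring
        _ = ‖x‖ ^ 2 * (1 / 3) := by rw [h3t]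
        _ = ‖x‖ ^ 2 / 3 := by ring
    linarith
  have hX : 0 < ‖x‖ ^ 2 := by
    have hn := norm_pos_iff.mpr hx0
    positivity
  have hu0 : u ≠ 0 := by
    intro h0
    have h1 : T u = 0 := by rw [h0, map_zero]
    rw [hTu] at h1
    have h2 : x = t • y := by rwa [sub_eq_zero] at h1
    have hy0 : y = 0 := by
      by_contra hy
      have h3 := hpos y hy
      have h4 : ⟪T y, y⟫ = 0 := by
        have h5 : T y = u := rfl
        rw [h5, h0, inner_zero_left]
      linarith
    exact hx0 (by rw [h2, hy0, smul_zero])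
  have hP : 0 < ⟪T u, u⟫ := hpos u hu0
  have hCS := form_cs T hsym hpos u x
  have hPb : ⟪T u, u⟫ ^ 2 ≤ 4 * (‖x‖ ^ 2 * (‖x‖ ^ 2 / β)) := by
    have h1 : ⟪T u, u⟫ ≤ ‖T u‖ * ‖u‖ := real_inner_le_norm _ _
    have h2 : ⟪T u, u⟫ ^ 2 ≤ ‖T u‖ ^ 2 * ‖u‖ ^ 2 := by
      nlinarith [norm_nonneg (T u), norm_nonneg u, hP]
    have h3 : ‖T u‖ ^ 2 ≤ 4 * ‖x‖ ^ 2 := by nlinarith [norm_nonneg (T u), norm_nonneg x]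
    nlinarith [sq_nonneg ‖u‖, hu_norm, hX]
  have hQ : 0 ≤ ⟪T x, x⟫ := hq x
  exact arith_final d g (‖x‖ ^ 2) ⟪T u, u⟫ ⟪T x, x⟫ ⟪T u, x⟫ β hd hg hX
    (by rw [hβdef, htdef]) hP hQ hTux (by nlinarith [hTux, hX]) hCS hPb

/-- The matrix quadratic form equals the operator form on the span. -/
lemma matrix_form (ψ : HilbertBasis ℕ ℝ H) (T : H →L[ℝ] H) (m : ℕ) (v : Fin m → ℝ) :
    v ⬝ᵥ (opMat ψ T m *ᵥ v) = ⟪T (∑ j : Fin m, v j • ψ (j : ℕ)), ∑ j : Fin m, v j • ψ (j : ℕ)⟫ := by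
  have hTs : T (∑ k : Fin m, v k • ψ (k : ℕ)) = ∑ k : Fin m, v k • T (ψ (k : ℕ)) := by
    rw [map_sum]
    simp
  rw [hTs, sum_inner]
  simp only [real_inner_smul_left, inner_sum, real_inner_smul_right, Finset.mul_sum]
  simp only [dotProduct, Matrix.mulVec, opMat, Matrix.of_apply, Finset.mul_sum]
  rw [Finset.sum_comm]
  refine Finset.sum_congr rfl fun k _ => ?_
  refine Finset.sum_congr rfl fun j _ => ?_
  rw [real_inner_comm (T (ψ (k : ℕ))) (ψ (j : ℕ))]
  ring

lemma span_coord (ψ : HilbertBasis ℕ ℝ H) (m : ℕ) (v : Fin m → ℝ) (i : ℕ) (hi : m ≤ i) :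
    ⟪∑ j : Fin m, v j • ψ (j : ℕ), ψ i⟫ = 0 := by
  rw [sum_inner]
  apply Finset.sum_eq_zero
  intro j _
  rw [real_inner_smul_left]
  have hne : (j : ℕ) ≠ i := by
    have := j.isLt
    omega
  rw [ψ.orthonormal.2 hne, mul_zero]

lemma span_norm (ψ : HilbertBasis ℕ ℝ H) (m : ℕ) (v : Fin m → ℝ) :
    ‖∑ j : Fin m, v j • ψ (j : ℕ)‖ ^ 2 = ∑ j : Fin m, v j ^ 2 := by
  rw [← real_inner_self_eq_norm_sq, sum_inner]
  apply Finset.sum_congr rfl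
  intro j _
  rw [real_inner_smul_left, inner_sum]
  simp only [real_inner_smul_right]
  rw [Finset.sum_eq_single j]
  · rw [orthonormal_iff_ite.mp ψ.orthonormal]
    simp [sq]
  · intro k _ hk
    have hne : (j : ℕ) ≠ (k : ℕ) := fun h => hk (Fin.val_injective h).symm
    rw [ψ.orthonormal.2 hne, mul_zero]
  · intro h
    exact absurd (Finset.mem_univ j) h

/-- Lemma B.1, (B.1): `sup_m γ_m ‖[T]_m⁻¹‖ ≤ 4d³`; in particular every
Galerkin matrix `[T]_m` is invertible. (0-indexed: `γ_m = γ (m-1)`.) -/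
theorem stmt_4 (ψ : HilbertBasis ℕ ℝ H) (γ : ℕ → ℝ) (d : ℝ) (hd : 1 ≤ d)
    (hγ1 : γ 0 = 1) (hγpos : ∀ j, 0 < γ j) (hγanti : Antitone γ)
    (hγ0 : Filter.Tendsto γ Filter.atTop (nhds 0)) (hγsum : Summable γ)
    (T : H →L[ℝ] H) (hT : memG ψ γ d T) :
    ∀ m : ℕ, 1 ≤ m → IsUnit (opMat ψ T m).det ∧
      γ (m - 1) * specNorm (opMat ψ T m)⁻¹ ≤ 4 * d ^ 3 := by
  intro m hm
  have hd0 : (0:ℝ) < d := lt_of_lt_of_le one_pos hd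
  set M := opMat ψ T m with hMdef
  set α : ℝ := γ (m - 1) / (4 * d ^ 3) with hαdef
  have hα : 0 < α := div_pos (hγpos _) (by positivity)
  have hkey : ∀ v : Fin m → ℝ, α * (∑ j : Fin m, v j ^ 2) ≤ v ⬝ᵥ (M *ᵥ v) := by
    intro v
    have h1 := key_coercive ψ γ d hd hγ1 hγpos hγanti T hT m hm
      (∑ j : Fin m, v j • ψ (j : ℕ)) (span_coord ψ m v)
    rw [span_norm] at h1
    rw [hMdef, matrix_form]
    exact h1
  have hsymM : ∀ j k : Fin m, M j k = M k j := by
    intro j k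
    calc M j k = ⟪ψ (j : ℕ), T (ψ (k : ℕ))⟫ := rfl
      _ = ⟪T (ψ (k : ℕ)), ψ (j : ℕ)⟫ := real_inner_comm _ _
      _ = ⟪ψ (k : ℕ), T (ψ (j : ℕ))⟫ := hT.1 _ _
      _ = M k j := rfl
  have hherm : M.IsHermitian := by
    apply Matrix.ext
    intro i j
    rw [Matrix.conjTranspose_apply, star_trivial]
    exact hsymM j i
  have hpd : M.PosDef := by
    refine Matrix.PosDef.of_dotProduct_mulVec_pos hherm fun v hv => ?_
    have h2 : 0 < ∑ j : Fin m, v j ^ 2 := by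
      obtain ⟨j, hj⟩ := Function.ne_iff.mp hv
      apply Finset.sum_pos' (fun k _ => sq_nonneg _)
      refine ⟨j, Finset.mem_univ j, ?_⟩
      have : v j ≠ 0 := hj
      positivity
    have h3 := hkey v
    have h4 : star v = v := by
      funext i; simp
    rw [h4]
    calc (0:ℝ) < α * (∑ j : Fin m, v j ^ 2) := by positivity
      _ ≤ v ⬝ᵥ (M *ᵥ v) := h3
  have hdet : IsUnit M.det := isUnit_iff_ne_zero.mpr hpd.det_pos.ne'
  refine ⟨hdet, ?_⟩
  have hMinv : M * M⁻¹ = 1 := Matrix.mul_nonsing_inv M hdet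
  have hbound : specNorm M⁻¹ ≤ α⁻¹ := by
    show ‖Matrix.toEuclideanCLM (𝕜 := ℝ) M⁻¹‖ ≤ α⁻¹
    apply ContinuousLinearMap.opNorm_le_bound _ (by positivity)
    intro w
    set v : EuclideanSpace ℝ (Fin m) := (Matrix.toEuclideanCLM (𝕜 := ℝ) M⁻¹) w with hvdef
    have hMv : (M *ᵥ (fun i => v i)) = (fun i => w i) := by
      have hv' : (fun i => v i) = M⁻¹ *ᵥ (fun i => w i) := rfl
      rw [hv', Matrix.mulVec_mulVec, hMinv, Matrix.one_mulVec]
    have hnv : ‖v‖ ^ 2 = ∑ j : Fin m, v j ^ 2 := by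
      rw [← real_inner_self_eq_norm_sq, PiLp.inner_apply]
      refine Finset.sum_congr rfl fun j _ => ?_
      simp [RCLike.inner_apply, sq]
    have hdot : (fun i => v i) ⬝ᵥ (fun i => w i) = ⟪v, w⟫ := by
      rw [PiLp.inner_apply]
      refine (Finset.sum_congr rfl fun j _ => ?_).symm
      simp [RCLike.inner_apply]
      ring
    have h1 : α * ‖v‖ ^ 2 ≤ ⟪v, w⟫ := by
      rw [hnv, ← hdot, ← hMv]
      exact hkey (fun i => v i)
    have h2 : ⟪v, w⟫ ≤ ‖v‖ * ‖w‖ := real_inner_le_norm v w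
    rcases eq_or_lt_of_le (norm_nonneg v) with hv0 | hv0
    · rw [← hv0]
      positivity
    · have h3 : α * ‖v‖ ≤ ‖w‖ := by nlinarith
      calc ‖v‖ = α⁻¹ * (α * ‖v‖) := by field_simp
        _ ≤ α⁻¹ * ‖w‖ := mul_le_mul_of_nonneg_left h3 (inv_nonneg.mpr hα.le)
  have hfin : γ (m - 1) * specNorm M⁻¹ ≤ γ (m - 1) * α⁻¹ :=
    mul_le_mul_of_nonneg_left hbound (hγpos _).le
  have heq : γ (m - 1) * α⁻¹ = 4 * d ^ 3 := by
    rw [hαdef, inv_div, mul_comm]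
    exact div_mul_cancel₀ _ (hγpos (m - 1)).ne'
  linarith


end
end

section
/- Let T ∈ G_γ^d, where the sequence γ is strictly positive, non-increasing with limit zero, summable, and γ_1 = 1. Then sup_{m∈ℕ} ‖ [∇_γ]_m^{1/2} [T]_m^{−1} [∇_γ]_m^{1/2} ‖ ≤ 4d³, where [∇_γ]_m is the m×m diagonal matrix with diagonal entries γ_1,…,γ_m and ‖·‖ is the spectral norm. -/
open scoped RealInnerProductSpace Classical ENNReal NNReal
open Matrix MeasureTheory

noncomputable section

variable {H : Type} [NormedAddCommGroup H] [InnerProductSpace ℝ H] [CompleteSpace H]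

variable {Ω : Type}

section Stmt5Aux

open Finset Filter

private lemma fin_dot_self_nonneg {n : ℕ} (x : Fin n → ℝ) : 0 ≤ x ⬝ᵥ x :=
  Finset.sum_nonneg fun i _ => mul_self_nonneg _

private lemma fin_dot_self_pos {n : ℕ} {x : Fin n → ℝ} (hx : x ≠ 0) : 0 < x ⬝ᵥ x := by
  obtain ⟨i, hi⟩ := Function.ne_iff.1 hx
  exact Finset.sum_pos' (fun j _ => mul_self_nonneg _) ⟨i, Finset.mem_univ i, mul_self_pos.2 hi⟩

private lemma fin_dot_symm {n : ℕ} {A : Matrix (Fin n) (Fin n) ℝ} (hA : Aᵀ = A)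
    (x y : Fin n → ℝ) : x ⬝ᵥ A *ᵥ y = y ⬝ᵥ A *ᵥ x := by
  calc x ⬝ᵥ A *ᵥ y = (x ᵥ* A) ⬝ᵥ y := Matrix.dotProduct_mulVec _ _ _
    _ = (x ᵥ* Aᵀ) ⬝ᵥ y := by rw [hA]
    _ = (A *ᵥ x) ⬝ᵥ y := by rw [Matrix.vecMul_transpose]
    _ = y ⬝ᵥ (A *ᵥ x) := dotProduct_comm _ _

private lemma herm_transpose {n : ℕ} {A : Matrix (Fin n) (Fin n) ℝ} (h : A.IsHermitian) :
    Aᵀ = A := by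
  ext i j
  conv_rhs => rw [← h]
  simp [Matrix.conjTranspose_apply]

private lemma psd_cs {n : ℕ} {A : Matrix (Fin n) (Fin n) ℝ} (hA : Aᵀ = A)
    (h0 : ∀ x, 0 ≤ x ⬝ᵥ A *ᵥ x) (x y : Fin n → ℝ) :
    (x ⬝ᵥ A *ᵥ y) ^ 2 ≤ (x ⬝ᵥ A *ᵥ x) * (y ⬝ᵥ A *ᵥ y) := by
  have key : ∀ t : ℝ, 0 ≤ (y ⬝ᵥ A *ᵥ y) * (t * t) + (2 * (x ⬝ᵥ A *ᵥ y)) * t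
      + (x ⬝ᵥ A *ᵥ x) := by
    intro t
    have h := h0 (x + t • y)
    have e : (x + t • y) ⬝ᵥ A *ᵥ (x + t • y)
        = (x ⬝ᵥ A *ᵥ x) + t * (x ⬝ᵥ A *ᵥ y) + t * (y ⬝ᵥ A *ᵥ x)
          + t * t * (y ⬝ᵥ A *ᵥ y) := by
      simp only [Matrix.mulVec_add, Matrix.mulVec_smul, dotProduct_add,
        add_dotProduct, dotProduct_smul, smul_dotProduct, smul_eq_mul]
      ring
    rw [e, fin_dot_symm hA y x] at h
    nlinarith [h]
  have hd := discrim_le_zero key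
  rw [discrim] at hd
  nlinarith [hd]

private lemma form_le_of_sq_le {N : ℕ} (hN : 0 < N) {A B : Matrix (Fin N) (Fin N) ℝ}
    (hA : A.IsHermitian) (hB : B.IsHermitian)
    (hA0 : ∀ x, 0 ≤ x ⬝ᵥ A *ᵥ x) (hBpd : ∀ x, x ≠ 0 → 0 < x ⬝ᵥ B *ᵥ x)
    (hsq : ∀ x, (A *ᵥ x) ⬝ᵥ (A *ᵥ x) ≤ (B *ᵥ x) ⬝ᵥ (B *ᵥ x)) (x : Fin N → ℝ) :
    x ⬝ᵥ A *ᵥ x ≤ x ⬝ᵥ B *ᵥ x := by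
  have hC : (B - A).IsHermitian := hB.sub hA
  haveI : Nonempty (Fin N) := ⟨⟨0, hN⟩⟩
  obtain ⟨i₀, -, hmin⟩ := Finset.exists_min_image Finset.univ hC.eigenvalues
    ⟨Classical.arbitrary _, Finset.mem_univ _⟩
  set μ := hC.eigenvalues i₀ with hμdef
  set u : Fin N → ℝ := ⇑(hC.eigenvectorBasis i₀) with hudef
  have hCu : (B - A) *ᵥ u = μ • u := hC.mulVec_eigenvectorBasis i₀
  have hnorm : ‖hC.eigenvectorBasis i₀‖ = 1 := hC.eigenvectorBasis.orthonormal.1 i₀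
  have huu : u ⬝ᵥ u = 1 := by
    have h1 : ⟪hC.eigenvectorBasis i₀, hC.eigenvectorBasis i₀⟫ = (1 : ℝ) := by
      rw [real_inner_self_eq_norm_sq, hnorm]; norm_num
    rw [← h1]
    simp [PiLp.inner_apply, RCLike.inner_apply, starRingEnd_apply, dotProduct, hudef]
    rw [← h1, PiLp.inner_apply]
    simp only [RCLike.inner_apply, conj_trivial, mul_comm]
  have hune : u ≠ 0 := by
    intro h
    rw [h] at huu
    simp [dotProduct] at huu
  have ha : 0 ≤ u ⬝ᵥ A *ᵥ u := hA0 u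
  have hb : 0 < u ⬝ᵥ B *ᵥ u := hBpd u hune
  have hBu : B *ᵥ u = A *ᵥ u + μ • u := by
    have : B = A + (B - A) := by abel
    rw [this, Matrix.add_mulVec, hCu]
  have hsqu := hsq u
  have hAuu : (A *ᵥ u) ⬝ᵥ u = u ⬝ᵥ A *ᵥ u := dotProduct_comm _ _
  have hexp : (B *ᵥ u) ⬝ᵥ (B *ᵥ u) = (A *ᵥ u) ⬝ᵥ (A *ᵥ u)
      + 2 * μ * (u ⬝ᵥ A *ᵥ u) + μ * μ := by
    rw [hBu]
    simp only [dotProduct_add, add_dotProduct, dotProduct_smul,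
      smul_dotProduct, smul_eq_mul, huu]
    rw [hAuu]
    ring
  have hμeq : μ = u ⬝ᵥ B *ᵥ u - u ⬝ᵥ A *ᵥ u := by
    have h1 : u ⬝ᵥ ((B - A) *ᵥ u) = μ := by
      rw [hCu]
      simp [dotProduct_smul, smul_eq_mul, huu]
    have h2 : u ⬝ᵥ ((B - A) *ᵥ u) = u ⬝ᵥ B *ᵥ u - u ⬝ᵥ A *ᵥ u := by
      rw [Matrix.sub_mulVec, dotProduct_sub]
    rw [← h1, h2]
  have hμ0 : 0 ≤ μ := by nlinarith [hsqu, hexp, hμeq, ha, hb]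
  have heig : ∀ i, 0 ≤ hC.eigenvalues i := fun i => le_trans hμ0 (hmin i (Finset.mem_univ _))
  have hPSD : (B - A).PosSemidef := hC.posSemidef_iff_eigenvalues_nonneg.2 heig
  have h := hPSD.dotProduct_mulVec_nonneg x
  simp only [star_trivial] at h
  rw [Matrix.sub_mulVec, dotProduct_sub] at h
  linarith [h]

private lemma specNorm_le_form_bound {n : ℕ} {S : Matrix (Fin n) (Fin n) ℝ} (hS : Sᵀ = S)
    {c : ℝ} (hc : 0 ≤ c) (h0 : ∀ x, 0 ≤ x ⬝ᵥ S *ᵥ x)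
    (hb : ∀ x, x ⬝ᵥ S *ᵥ x ≤ c * (x ⬝ᵥ x)) : specNorm S ≤ c := by
  refine ContinuousLinearMap.opNorm_le_bound _ hc fun w => ?_
  set x : Fin n → ℝ := WithLp.equiv 2 _ w with hxdef
  set z : Fin n → ℝ := S *ᵥ x with hzdef
  have happ : (Matrix.toEuclideanCLM (𝕜 := ℝ) S) w = (WithLp.equiv 2 _).symm z := by
    conv_lhs => rw [← (WithLp.equiv 2 _).symm_apply_apply w]
    rfl
  have hnw : ‖w‖ ^ 2 = x ⬝ᵥ x := by
    rw [EuclideanSpace.norm_eq, Real.sq_sqrt (by positivity)]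
    simp [dotProduct, hxdef, Real.norm_eq_abs, sq_abs, pow_two]
  have hnz : ‖(Matrix.toEuclideanCLM (𝕜 := ℝ) S) w‖ ^ 2 = z ⬝ᵥ z := by
    rw [happ, EuclideanSpace.norm_eq, Real.sq_sqrt (by positivity)]
    simp [dotProduct, Real.norm_eq_abs, sq_abs, pow_two]
  have e1 : x ⬝ᵥ S *ᵥ z = z ⬝ᵥ z := by
    rw [fin_dot_symm hS x z, ← hzdef]
  have e2 := psd_cs hS h0 x z
  have h5 : (z ⬝ᵥ z) ^ 2 ≤ (c * (x ⬝ᵥ x)) * (c * (z ⬝ᵥ z)) := by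
    calc (z ⬝ᵥ z) ^ 2 = (x ⬝ᵥ S *ᵥ z) ^ 2 := by rw [e1]
      _ ≤ (x ⬝ᵥ S *ᵥ x) * (z ⬝ᵥ S *ᵥ z) := e2
      _ ≤ (c * (x ⬝ᵥ x)) * (c * (z ⬝ᵥ z)) :=
          mul_le_mul (hb x) (hb z) (h0 z) (mul_nonneg hc (fin_dot_self_nonneg x))
  have h6 : z ⬝ᵥ z ≤ c ^ 2 * (x ⬝ᵥ x) := by
    rcases eq_or_lt_of_le (fin_dot_self_nonneg z) with h | h
    · rw [← h]
      exact mul_nonneg (sq_nonneg c) (fin_dot_self_nonneg x)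
    · nlinarith [h5, h]
  have h7 : ‖(Matrix.toEuclideanCLM (𝕜 := ℝ) S) w‖ ^ 2 ≤ (c * ‖w‖) ^ 2 := by
    rw [hnz, mul_pow, hnw]
    exact h6
  calc ‖(Matrix.toEuclideanCLM (𝕜 := ℝ) S) w‖
      = Real.sqrt (‖(Matrix.toEuclideanCLM (𝕜 := ℝ) S) w‖ ^ 2) :=
        (Real.sqrt_sq (norm_nonneg _)).symm
    _ ≤ Real.sqrt ((c * ‖w‖) ^ 2) := Real.sqrt_le_sqrt h7
    _ = c * ‖w‖ := Real.sqrt_sq (mul_nonneg hc (norm_nonneg _))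

variable (ψ : HilbertBasis ℕ ℝ H) (T : H →L[ℝ] H) (γ : ℕ → ℝ) (d : ℝ)

private lemma inner_sum_basis (n : ℕ) (v : Fin n → ℝ) (k : ℕ) :
    ⟪∑ j : Fin n, v j • (ψ (j : ℕ)), ψ k⟫ = if h : k < n then v ⟨k, h⟩ else 0 := by
  have horth := ψ.orthonormal
  rw [orthonormal_iff_ite] at horth
  rw [sum_inner]
  have e : ∀ j : Fin n, ⟪v j • (ψ (j : ℕ)), ψ k⟫
      = v j * (if (j : ℕ) = k then (1 : ℝ) else 0) := fun j => by
    rw [real_inner_smul_left, horth]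
  rw [Finset.sum_congr rfl fun j _ => e j]
  by_cases h : k < n
  · rw [dif_pos h]
    rw [Finset.sum_eq_single (⟨k, h⟩ : Fin n)
      (fun j _ hj => by rw [if_neg (fun hc => hj (Fin.ext hc)), mul_zero])
      (fun hmem => absurd (Finset.mem_univ _) hmem)]
    rw [if_pos rfl, mul_one]
  · rw [dif_neg h]
    refine Finset.sum_eq_zero fun j _ => ?_
    rw [if_neg (fun hc : (j : ℕ) = k => h (hc ▸ j.isLt)), mul_zero]

private lemma inner_self_sum (n : ℕ) (v : Fin n → ℝ) :
    ⟪∑ j : Fin n, v j • (ψ (j : ℕ)), ∑ j : Fin n, v j • (ψ (j : ℕ))⟫ = v ⬝ᵥ v := by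
  rw [inner_sum]
  refine Finset.sum_congr rfl fun j _ => ?_
  rw [real_inner_smul_right, inner_sum_basis ψ n v (j : ℕ), dif_pos j.isLt]

private lemma weighted_tsum (w : ℕ → ℝ) (n : ℕ) (v : Fin n → ℝ) :
    ∑' j, w j * ⟪∑ i : Fin n, v i • (ψ (i : ℕ)), ψ j⟫ ^ 2
      = ∑ j : Fin n, w (j : ℕ) * (v j) ^ 2 := by
  rw [tsum_eq_sum (s := Finset.range n) ?_]
  · rw [← Fin.sum_univ_eq_sum_range
      (fun j => w j * ⟪∑ i : Fin n, v i • (ψ (i : ℕ)), ψ j⟫ ^ 2) n]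
    refine Finset.sum_congr rfl fun j _ => ?_
    rw [inner_sum_basis ψ n v (j : ℕ), dif_pos j.isLt]
  · intro j hj
    rw [inner_sum_basis ψ n v j, dif_neg (by simpa using hj)]
    simp

private lemma quad_form_eq (n : ℕ) (v : Fin n → ℝ) :
    v ⬝ᵥ (opMat ψ T n) *ᵥ v
      = ⟪∑ j : Fin n, v j • (ψ (j : ℕ)), T (∑ j : Fin n, v j • (ψ (j : ℕ)))⟫ := by
  calc v ⬝ᵥ (opMat ψ T n) *ᵥ v
      = ∑ j : Fin n, ∑ k : Fin n, v j * (⟪ψ (j : ℕ), T (ψ (k : ℕ))⟫ * v k) := by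
        simp [dotProduct, Matrix.mulVec, opMat, Finset.mul_sum]
    _ = ⟪∑ j : Fin n, v j • (ψ (j : ℕ)), T (∑ j : Fin n, v j • (ψ (j : ℕ)))⟫ := by
        rw [map_sum, inner_sum, Finset.sum_comm]
        refine Finset.sum_congr rfl fun k _ => ?_
        rw [T.map_smul, real_inner_smul_right, sum_inner, Finset.mul_sum]
        refine Finset.sum_congr rfl fun j _ => ?_
        rw [real_inner_smul_left]
        ring

private lemma quad_nonneg (hT : memG ψ γ d T) (n : ℕ) (x : Fin n → ℝ) :
    0 ≤ x ⬝ᵥ (opMat ψ T n) *ᵥ x := by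
  rw [quad_form_eq]
  set g := ∑ j : Fin n, x j • (ψ (j : ℕ)) with hg
  by_cases hg0 : g = 0
  · simp [hg0]
  · have hpos := hT.2.1 g hg0
    have e : ⟪g, T g⟫ = ⟪T g, g⟫ := real_inner_comm _ _
    rw [e]
    exact le_of_lt hpos

private lemma opMat_herm (hT : memG ψ γ d T) (n : ℕ) : (opMat ψ T n).IsHermitian := by
  show (opMat ψ T n)ᴴ = opMat ψ T n
  ext i j
  simp only [Matrix.conjTranspose_apply, opMat, Matrix.of_apply, star_trivial]
  rw [← hT.1, real_inner_comm]

private lemma Tpsi_norm_le (hT : memG ψ γ d T) (k : ℕ) :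
    ‖T (ψ k)‖ ^ 2 ≤ d ^ 2 * γ k ^ 2 := by
  have h := (hT.2.2.2 (ψ k)).2
  have horth := ψ.orthonormal
  rw [orthonormal_iff_ite] at horth
  have e : (∑' j, γ j ^ 2 * ⟪ψ k, ψ j⟫ ^ 2) = γ k ^ 2 := by
    rw [tsum_eq_single k]
    · rw [horth, if_pos rfl]
      ring
    · intro j hj
      rw [horth, if_neg (Ne.symm hj)]
      ring
  rw [e] at h
  exact h

private lemma parseval_sq (g : H) : ‖g‖ ^ 2 = ∑' k, ⟪g, ψ k⟫ ^ 2 := by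
  have h := ψ.tsum_inner_mul_inner g g
  have e : ∀ k : ℕ, ⟪g, ψ k⟫ * ⟪ψ k, g⟫ = ⟪g, ψ k⟫ ^ 2 := fun k => by
    rw [real_inner_comm (ψ k) g]; ring
  rw [← real_inner_self_eq_norm_sq, ← h]
  exact tsum_congr e

private lemma parseval_summable (g : H) : Summable (fun k => ⟪g, ψ k⟫ ^ 2) := by
  refine (ψ.summable_inner_mul_inner g g).congr fun k => ?_
  rw [real_inner_comm (ψ k) g]; ring

set_option maxHeartbeats 1000000 in
/-- The key quadratic-form inequality: `∑ γ_j v_j² ≤ d · v ⬝ [T]_n v`. -/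
private lemma key_form (hd : 1 ≤ d) (hγ1 : γ 0 = 1) (hγpos : ∀ j, 0 < γ j)
    (hγanti : Antitone γ) (hγsum : Summable γ) (hT : memG ψ γ d T)
    (n : ℕ) (v : Fin n → ℝ) :
    (∑ j : Fin n, γ (j : ℕ) * v j ^ 2) ≤ d * (v ⬝ᵥ (opMat ψ T n) *ᵥ v) := by
  have hd0 : (0 : ℝ) < d := lt_of_lt_of_le one_pos hd
  have hγle1 : ∀ j, γ j ≤ 1 := fun j => hγ1 ▸ hγanti (Nat.zero_le j)
  have hγsq : Summable (fun k => γ k ^ 2) :=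
    Summable.of_nonneg_of_le (fun k => sq_nonneg _)
      (fun k => by nlinarith [hγpos k, hγle1 k]) hγsum
  refine le_of_forall_pos_le_add fun ε hε => ?_
  set Sv : ℝ := v ⬝ᵥ v with hSv
  have hSv0 : 0 ≤ Sv := fin_dot_self_nonneg v
  -- choose a large truncation level N
  have htail : Tendsto (fun i => ∑' k, γ (k + i) ^ 2) atTop (nhds 0) :=
    tendsto_sum_nat_add (fun k => γ k ^ 2)
  have htail2 : Tendsto (fun i => d * Real.sqrt (d ^ 2 * ∑' k, γ (k + i) ^ 2) * (Sv + 1))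
      atTop (nhds 0) := by
    have h1 : Tendsto (fun i => d ^ 2 * ∑' k, γ (k + i) ^ 2) atTop (nhds 0) := by
      have := htail.const_mul (d ^ 2)
      simpa using this
    have h2 := h1.sqrt
    rw [Real.sqrt_zero] at h2
    have h3 := (h2.const_mul d).mul_const (Sv + 1)
    simpa using h3
  have hev : ∀ᶠ i in atTop, d * Real.sqrt (d ^ 2 * ∑' k, γ (k + i) ^ 2) * (Sv + 1) < ε :=
    htail2.eventually_lt_const hε
  obtain ⟨N, hN⟩ := (hev.and (eventually_ge_atTop (max n 1))).exists
  obtain ⟨hNε, hNn'⟩ := hN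
  have hNn : n ≤ N := le_trans (le_max_left _ _) hNn'
  have hN1 : 0 < N := lt_of_lt_of_le one_pos (le_trans (le_max_right _ _) hNn')
  set τ : ℝ := ∑' k, γ (k + N) ^ 2 with hτ
  have hτsum : Summable (fun k => γ (k + N) ^ 2) := (summable_nat_add_iff N).2 hγsq
  have hτpos : 0 < τ := Summable.tsum_pos hτsum (fun k => sq_nonneg _) 0 (pow_pos (hγpos _) 2)
  set t : ℝ := d ^ 2 * τ with ht
  have ht0 : 0 < t := by positivity
  set A : Matrix (Fin N) (Fin N) ℝ := Matrix.diagonal (fun j : Fin N => γ (j : ℕ) / d) with hA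
  set B : Matrix (Fin N) (Fin N) ℝ := opMat ψ T N with hB
  set B' : Matrix (Fin N) (Fin N) ℝ := B + Matrix.diagonal (fun _ : Fin N => Real.sqrt t)
    with hB'
  have hAh : A.IsHermitian := Matrix.isHermitian_diagonal _
  have hBh : B.IsHermitian := opMat_herm ψ T γ d hT N
  have hDh : (Matrix.diagonal (fun _ : Fin N => Real.sqrt t)).IsHermitian :=
    Matrix.isHermitian_diagonal _
  have hB'h : B'.IsHermitian := hBh.add hDh
  have hA0 : ∀ x : Fin N → ℝ, 0 ≤ x ⬝ᵥ A *ᵥ x := by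
    intro x
    simp only [hA]
    refine Finset.sum_nonneg fun j _ => ?_
    rw [Matrix.mulVec_diagonal]
    have e : x j * (γ (j : ℕ) / d * x j) = (γ (j : ℕ) / d) * (x j * x j) := by ring
    rw [e]
    exact mul_nonneg (div_nonneg (hγpos _).le hd0.le) (mul_self_nonneg _)
  have hdiagform : ∀ x : Fin N → ℝ,
      x ⬝ᵥ (Matrix.diagonal (fun _ : Fin N => Real.sqrt t)) *ᵥ x = Real.sqrt t * (x ⬝ᵥ x) := by
    intro x
    simp only [dotProduct, Matrix.mulVec_diagonal, Finset.mul_sum]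
    exact Finset.sum_congr rfl fun j _ => by ring
  have hB'pd : ∀ x : Fin N → ℝ, x ≠ 0 → 0 < x ⬝ᵥ B' *ᵥ x := by
    intro x hx
    rw [hB', Matrix.add_mulVec, dotProduct_add, hdiagform]
    have h1 := quad_nonneg ψ T γ d hT N x
    have h2 : 0 < Real.sqrt t * (x ⬝ᵥ x) :=
      mul_pos (Real.sqrt_pos.2 ht0) (fin_dot_self_pos hx)
    rw [← hB] at h1
    linarith
  -- the square comparison
  have hsq : ∀ x : Fin N → ℝ, (A *ᵥ x) ⬝ᵥ (A *ᵥ x) ≤ (B' *ᵥ x) ⬝ᵥ (B' *ᵥ x) := by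
    intro x
    set g : H := ∑ j : Fin N, x j • (ψ (j : ℕ)) with hg
    -- lower bound from memG
    have hlow := (hT.2.2.2 g).1
    have hwt : (∑' j, γ j ^ 2 * ⟪g, ψ j⟫ ^ 2) = ∑ j : Fin N, γ (j : ℕ) ^ 2 * x j ^ 2 :=
      weighted_tsum ψ (fun j => γ j ^ 2) N x
    -- Parseval split of ‖T g‖²
    have hTg : ‖T g‖ ^ 2 = ∑' k, ⟪T g, ψ k⟫ ^ 2 := parseval_sq ψ (T g)
    have hsummTg : Summable (fun k => ⟪T g, ψ k⟫ ^ 2) := parseval_summable ψ (T g)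
    have hsplit : (∑ k ∈ Finset.range N, ⟪T g, ψ k⟫ ^ 2) + ∑' k, ⟪T g, ψ (k + N)⟫ ^ 2
        = ∑' k, ⟪T g, ψ k⟫ ^ 2 := Summable.sum_add_tsum_nat_add N hsummTg
    -- head equals ‖B x‖²
    have hBx : ∀ k : Fin N, (B *ᵥ x) k = ⟪T g, ψ (k : ℕ)⟫ := by
      intro k
      have e1 : (B *ᵥ x) k = ∑ j : Fin N, ⟪ψ (k : ℕ), T (ψ (j : ℕ))⟫ * x j := by
        simp [hB, Matrix.mulVec, dotProduct, opMat]
      have e2 : ⟪ψ (k : ℕ), T g⟫ = ∑ j : Fin N, ⟪ψ (k : ℕ), T (ψ (j : ℕ))⟫ * x j := by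
        rw [hg, map_sum, inner_sum]
        exact Finset.sum_congr rfl fun j _ => by
          rw [T.map_smul, real_inner_smul_right]; ring
      rw [e1, ← e2, real_inner_comm]
    have hhead : (∑ k ∈ Finset.range N, ⟪T g, ψ k⟫ ^ 2) = (B *ᵥ x) ⬝ᵥ (B *ᵥ x) := by
      rw [← Fin.sum_univ_eq_sum_range (fun k => ⟪T g, ψ k⟫ ^ 2) N]
      simp only [dotProduct]
      exact Finset.sum_congr rfl fun k _ => by rw [hBx k]; ring
    -- tail bound
    have hgnorm : ‖g‖ ^ 2 = x ⬝ᵥ x := by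
      rw [← real_inner_self_eq_norm_sq, hg, inner_self_sum]
    have htailb : (∑' k, ⟪T g, ψ (k + N)⟫ ^ 2) ≤ t * (x ⬝ᵥ x) := by
      have hterm : ∀ k : ℕ, ⟪T g, ψ (k + N)⟫ ^ 2 ≤ (x ⬝ᵥ x) * (d ^ 2 * γ (k + N) ^ 2) := by
        intro k
        have e1 : ⟪T g, ψ (k + N)⟫ = ⟪g, T (ψ (k + N))⟫ := hT.1 g (ψ (k + N))
        have e2 : |⟪g, T (ψ (k + N))⟫| ≤ ‖g‖ * ‖T (ψ (k + N))‖ := abs_real_inner_le_norm _ _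
        have e3 : ⟪g, T (ψ (k + N))⟫ ^ 2 ≤ ‖g‖ ^ 2 * ‖T (ψ (k + N))‖ ^ 2 := by
          rw [← sq_abs]
          calc |⟪g, T (ψ (k + N))⟫| ^ 2 ≤ (‖g‖ * ‖T (ψ (k + N))‖) ^ 2 := by
                apply pow_le_pow_left₀ (abs_nonneg _) e2
            _ = ‖g‖ ^ 2 * ‖T (ψ (k + N))‖ ^ 2 := by ring
        have e4 := Tpsi_norm_le ψ T γ d hT (k + N)
        rw [e1]
        calc ⟪g, T (ψ (k + N))⟫ ^ 2 ≤ ‖g‖ ^ 2 * ‖T (ψ (k + N))‖ ^ 2 := e3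
          _ ≤ ‖g‖ ^ 2 * (d ^ 2 * γ (k + N) ^ 2) := by
              apply mul_le_mul_of_nonneg_left e4 (by positivity)
          _ = (x ⬝ᵥ x) * (d ^ 2 * γ (k + N) ^ 2) := by rw [hgnorm]
      have hsumr : Summable (fun k => (x ⬝ᵥ x) * (d ^ 2 * γ (k + N) ^ 2)) :=
        (hτsum.mul_left _).mul_left _
      have hsuml : Summable (fun k => ⟪T g, ψ (k + N)⟫ ^ 2) :=
        (summable_nat_add_iff N).2 hsummTg
      calc (∑' k, ⟪T g, ψ (k + N)⟫ ^ 2)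
          ≤ ∑' k, (x ⬝ᵥ x) * (d ^ 2 * γ (k + N) ^ 2) := hsuml.tsum_le_tsum hterm hsumr
        _ = (x ⬝ᵥ x) * (d ^ 2 * τ) := by
            rw [tsum_mul_left, tsum_mul_left]
        _ = t * (x ⬝ᵥ x) := by rw [ht]; ring
    -- combine
    have hcentral : (∑ j : Fin N, γ (j : ℕ) ^ 2 * x j ^ 2) / d ^ 2
        ≤ (B *ᵥ x) ⬝ᵥ (B *ᵥ x) + t * (x ⬝ᵥ x) := by
      have h1 : (d ^ 2)⁻¹ * (∑ j : Fin N, γ (j : ℕ) ^ 2 * x j ^ 2) ≤ ‖T g‖ ^ 2 := by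
        rw [← hwt]; exact hlow
      have h2 : ‖T g‖ ^ 2 = (B *ᵥ x) ⬝ᵥ (B *ᵥ x) + ∑' k, ⟪T g, ψ (k + N)⟫ ^ 2 := by
        rw [hTg, ← hsplit, hhead]
      rw [div_eq_inv_mul]
      calc (d ^ 2)⁻¹ * (∑ j : Fin N, γ (j : ℕ) ^ 2 * x j ^ 2) ≤ ‖T g‖ ^ 2 := h1
        _ = (B *ᵥ x) ⬝ᵥ (B *ᵥ x) + ∑' k, ⟪T g, ψ (k + N)⟫ ^ 2 := h2
        _ ≤ (B *ᵥ x) ⬝ᵥ (B *ᵥ x) + t * (x ⬝ᵥ x) := by linarith [htailb]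
    have hAx : (A *ᵥ x) ⬝ᵥ (A *ᵥ x) = (∑ j : Fin N, γ (j : ℕ) ^ 2 * x j ^ 2) / d ^ 2 := by
      simp only [hA, dotProduct, Matrix.mulVec_diagonal, Finset.sum_div]
      exact Finset.sum_congr rfl fun j _ => by
        field_simp
    have hBx0 : 0 ≤ (B *ᵥ x) ⬝ᵥ x := by
      rw [dotProduct_comm]
      exact quad_nonneg ψ T γ d hT N x
    have hB'x : (B' *ᵥ x) ⬝ᵥ (B' *ᵥ x) = (B *ᵥ x) ⬝ᵥ (B *ᵥ x)
        + 2 * Real.sqrt t * ((B *ᵥ x) ⬝ᵥ x) + t * (x ⬝ᵥ x) := by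
      have hdx : (Matrix.diagonal (fun _ : Fin N => Real.sqrt t)) *ᵥ x = Real.sqrt t • x := by
        ext j
        simp [Matrix.mulVec_diagonal]
      rw [hB', Matrix.add_mulVec, hdx]
      simp only [dotProduct_add, add_dotProduct, dotProduct_smul,
        smul_dotProduct, smul_eq_mul]
      have hsq2 : Real.sqrt t * Real.sqrt t = t := Real.mul_self_sqrt ht0.le
      have hcomm : x ⬝ᵥ (B *ᵥ x) = (B *ᵥ x) ⬝ᵥ x := dotProduct_comm _ _
      linear_combination Real.sqrt t * hcomm + (x ⬝ᵥ x) * hsq2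
    have hstx : 0 ≤ 2 * Real.sqrt t * ((B *ᵥ x) ⬝ᵥ x) := by
      have := Real.sqrt_nonneg t
      positivity
    rw [hAx, hB'x]
    linarith [hcentral]
  -- apply monotonicity
  have hform := form_le_of_sq_le hN1 hAh hB'h hA0 hB'pd hsq
  -- extension of v by zero
  set v' : Fin N → ℝ := fun j => if h : (j : ℕ) < n then v ⟨(j : ℕ), h⟩ else 0 with hv'
  have hv'sum : ∀ (f : ℕ → ℝ),
      (∑ j : Fin N, f (j : ℕ) * (v' j) ^ 2) = ∑ j : Fin n, f (j : ℕ) * (v j) ^ 2 := by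
    intro f
    rw [Fin.sum_univ_eq_sum_range (fun j => f j * (if h : j < n then v ⟨j, h⟩ else 0) ^ 2) N]
    rw [← Finset.sum_subset (Finset.range_subset_range.2 hNn)]
    · rw [← Fin.sum_univ_eq_sum_range (fun j => f j * (if h : j < n then v ⟨j, h⟩ else 0) ^ 2) n]
      exact Finset.sum_congr rfl fun j _ => by rw [dif_pos j.isLt]
    · intro j _ hj
      rw [dif_neg (by simpa using hj)]
      ring
  have hvel : (∑ j : Fin N, v' j • (ψ (j : ℕ))) = ∑ j : Fin n, v j • (ψ (j : ℕ)) := by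
    rw [Fin.sum_univ_eq_sum_range (fun j => (if h : j < n then v ⟨j, h⟩ else 0) • ψ j) N]
    rw [← Finset.sum_subset (Finset.range_subset_range.2 hNn)]
    · rw [← Fin.sum_univ_eq_sum_range (fun j => (if h : j < n then v ⟨j, h⟩ else 0) • ψ j) n]
      exact Finset.sum_congr rfl fun j _ => by rw [dif_pos j.isLt]
    · intro j _ hj
      rw [dif_neg (by simpa using hj)]
      exact zero_smul _ _
  have hAv' : v' ⬝ᵥ A *ᵥ v' = (∑ j : Fin n, γ (j : ℕ) * v j ^ 2) / d := by
    have e1 : v' ⬝ᵥ A *ᵥ v' = ∑ j : Fin N, (γ (j : ℕ) / d) * (v' j) ^ 2 := by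
      simp only [hA, dotProduct, Matrix.mulVec_diagonal]
      exact Finset.sum_congr rfl fun j _ => by ring
    rw [e1, hv'sum (fun j => γ j / d), Finset.sum_div]
    exact Finset.sum_congr rfl fun j _ => by ring
  have hBv' : v' ⬝ᵥ B *ᵥ v' = v ⬝ᵥ (opMat ψ T n) *ᵥ v := by
    rw [hB, quad_form_eq ψ T N v', hvel, ← quad_form_eq ψ T n v]
  have hv'v' : v' ⬝ᵥ v' = Sv := by
    have e1 : v' ⬝ᵥ v' = ∑ j : Fin N, (1 : ℝ) * (v' j) ^ 2 := by
      simp only [dotProduct]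
      exact Finset.sum_congr rfl fun j _ => by ring
    rw [e1, hv'sum (fun _ => (1 : ℝ)), hSv]
    simp only [dotProduct]
    exact Finset.sum_congr rfl fun j _ => by ring
  have hfin := hform v'
  rw [hAv'] at hfin
  have hB'v' : v' ⬝ᵥ B' *ᵥ v' = v ⬝ᵥ (opMat ψ T n) *ᵥ v + Real.sqrt t * Sv := by
    rw [hB', Matrix.add_mulVec, dotProduct_add, hdiagform, hBv', hv'v']
  rw [hB'v'] at hfin
  have hsqt : 0 ≤ Real.sqrt t := Real.sqrt_nonneg t
  have hεb : d * Real.sqrt t * (Sv + 1) < ε := by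
    rw [ht, hτ] at *
    exact hNε
  have hmul := mul_le_mul_of_nonneg_left hfin hd0.le
  have hcanc : d * ((∑ j : Fin n, γ (j : ℕ) * v j ^ 2) / d)
      = ∑ j : Fin n, γ (j : ℕ) * v j ^ 2 := by
    field_simp
  rw [hcanc] at hmul
  have hlast : d * (Real.sqrt t * Sv) ≤ d * Real.sqrt t * (Sv + 1) := by nlinarith
  calc (∑ j : Fin n, γ (j : ℕ) * v j ^ 2)
      ≤ d * (v ⬝ᵥ (opMat ψ T n) *ᵥ v + Real.sqrt t * Sv) := hmul
    _ = d * (v ⬝ᵥ (opMat ψ T n) *ᵥ v) + d * (Real.sqrt t * Sv) := by ring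
    _ ≤ d * (v ⬝ᵥ (opMat ψ T n) *ᵥ v) + d * Real.sqrt t * (Sv + 1) := by linarith
    _ ≤ d * (v ⬝ᵥ (opMat ψ T n) *ᵥ v) + ε := by linarith

end Stmt5Aux

/-- Lemma B.1, (B.2): `sup_m ‖[∇_γ]_m^{1/2} [T]_m⁻¹ [∇_γ]_m^{1/2}‖ ≤ 4d³`. -/
theorem stmt_5 (ψ : HilbertBasis ℕ ℝ H) (γ : ℕ → ℝ) (d : ℝ) (hd : 1 ≤ d)
    (hγ1 : γ 0 = 1) (hγpos : ∀ j, 0 < γ j) (hγanti : Antitone γ)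
    (hγ0 : Filter.Tendsto γ Filter.atTop (nhds 0)) (hγsum : Summable γ)
    (T : H →L[ℝ] H) (hT : memG ψ γ d T) :
    ∀ m : ℕ, 1 ≤ m →
      specNorm (Matrix.diagonal (fun j : Fin m => Real.sqrt (γ (j : ℕ))) *
          (opMat ψ T m)⁻¹ *
          Matrix.diagonal (fun j : Fin m => Real.sqrt (γ (j : ℕ)))) ≤ 4 * d ^ 3 := by
  intro m _hm
  have hd0 : (0 : ℝ) < d := lt_of_lt_of_le one_pos hd
  have key := key_form ψ T γ d hd hγ1 hγpos hγanti hγsum hT m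
  set M : Matrix (Fin m) (Fin m) ℝ := opMat ψ T m with hM
  have hMh : M.IsHermitian := opMat_herm ψ T γ d hT m
  have hMt : Mᵀ = M := herm_transpose hMh
  have hMposd : ∀ x : Fin m → ℝ, x ≠ 0 → 0 < x ⬝ᵥ M *ᵥ x := by
    intro x hx
    have h1 := key x
    have h2 : 0 < ∑ j : Fin m, γ (j : ℕ) * x j ^ 2 := by
      obtain ⟨i, hi⟩ := Function.ne_iff.1 hx
      refine Finset.sum_pos' (fun j _ => ?_) ⟨i, Finset.mem_univ i, ?_⟩
      · have := (hγpos (j : ℕ)).le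
        positivity
      · have hxi : 0 < x i ^ 2 :=
          lt_of_le_of_ne (sq_nonneg _) (Ne.symm (pow_ne_zero _ hi))
        exact mul_pos (hγpos (i : ℕ)) hxi
    nlinarith [h1, h2, hd0]
  have hMpd : M.PosDef := by
    refine Matrix.PosDef.of_dotProduct_mulVec_pos hMh fun x hx => ?_
    have hstar : star x = x := by
      ext i
      simp
    rw [hstar]
    exact hMposd x hx
  have hdet : IsUnit M.det := isUnit_iff_ne_zero.2 (ne_of_gt hMpd.det_pos)
  have hMMinv : M * M⁻¹ = 1 := Matrix.mul_nonsing_inv M hdet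
  have hMinvT : (M⁻¹)ᵀ = M⁻¹ := by rw [Matrix.transpose_nonsing_inv, hMt]
  set Dg : Matrix (Fin m) (Fin m) ℝ :=
    Matrix.diagonal (fun j : Fin m => Real.sqrt (γ (j : ℕ))) with hDg
  set S : Matrix (Fin m) (Fin m) ℝ := Dg * M⁻¹ * Dg with hS
  have hDgt : Dgᵀ = Dg := Matrix.diagonal_transpose _
  have hSt : Sᵀ = S := by
    rw [hS, Matrix.transpose_mul, Matrix.transpose_mul, hDgt, hMinvT, Matrix.mul_assoc]
  have main : ∀ w : Fin m → ℝ, 0 ≤ w ⬝ᵥ S *ᵥ w ∧ w ⬝ᵥ S *ᵥ w ≤ d * (w ⬝ᵥ w) := by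
    intro w
    set u : Fin m → ℝ := fun j => Real.sqrt (γ (j : ℕ)) * w j with hu
    set x : Fin m → ℝ := M⁻¹ *ᵥ u with hx
    have hDgw : Dg *ᵥ w = u := by
      ext j
      simp [hDg, Matrix.mulVec_diagonal, hu]
    have hMx : M *ᵥ x = u := by
      rw [hx, Matrix.mulVec_mulVec, hMMinv, Matrix.one_mulVec]
    have hSwx : w ⬝ᵥ S *ᵥ w = x ⬝ᵥ M *ᵥ x := by
      have e1 : S *ᵥ w = Dg *ᵥ (M⁻¹ *ᵥ u) := by
        rw [← hDgw]
        simp only [Matrix.mulVec_mulVec, hS, Matrix.mul_assoc]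
      have e2 : w ⬝ᵥ (Dg *ᵥ (M⁻¹ *ᵥ u)) = u ⬝ᵥ (M⁻¹ *ᵥ u) := by
        simp only [hDg, dotProduct, Matrix.mulVec_diagonal, hu]
        exact Finset.sum_congr rfl fun j _ => by ring
      rw [e1, e2, ← hx, ← hMx]
      exact dotProduct_comm _ _
    constructor
    · rw [hSwx]
      have h1 := key x
      have h2 : 0 ≤ ∑ j : Fin m, γ (j : ℕ) * x j ^ 2 :=
        Finset.sum_nonneg fun j _ => by
          have := (hγpos (j : ℕ)).le
          positivity
      nlinarith [h1, h2, hd0]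
    · rw [hSwx]
      have hxu : x ⬝ᵥ u = x ⬝ᵥ M *ᵥ x := by rw [← hMx]
      have hkey := key x
      have hsum : (∑ j : Fin m, (2 * (x j * u j) - γ (j : ℕ) * x j ^ 2 / d))
          ≤ ∑ j : Fin m, d * w j ^ 2 := by
        refine Finset.sum_le_sum fun j _ => ?_
        have hγj := hγpos (j : ℕ)
        have hsγ : Real.sqrt (γ (j : ℕ)) ^ 2 = γ (j : ℕ) := Real.sq_sqrt hγj.le
        have huj : u j = Real.sqrt (γ (j : ℕ)) * w j := rfl
        rw [huj]
        have hdd : γ (j : ℕ) * x j ^ 2 / d * d = γ (j : ℕ) * x j ^ 2 := by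
          field_simp
        nlinarith [sq_nonneg (Real.sqrt (γ (j : ℕ)) * x j - d * w j), hsγ, hd0, hγj, hdd,
          Real.sqrt_nonneg (γ (j : ℕ))]
      have hLHS : x ⬝ᵥ M *ᵥ x ≤ 2 * (x ⬝ᵥ u) - (∑ j : Fin m, γ (j : ℕ) * x j ^ 2) / d := by
        have hdiv : (∑ j : Fin m, γ (j : ℕ) * x j ^ 2) / d ≤ x ⬝ᵥ M *ᵥ x :=
          (div_le_iff₀ hd0).2 (by linarith [hkey])
        linarith [hxu, hdiv]
      have hexp : 2 * (x ⬝ᵥ u) - (∑ j : Fin m, γ (j : ℕ) * x j ^ 2) / d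
          = ∑ j : Fin m, (2 * (x j * u j) - γ (j : ℕ) * x j ^ 2 / d) := by
        rw [Finset.sum_sub_distrib, ← Finset.sum_div, ← Finset.mul_sum]
        rfl
      have hend : (∑ j : Fin m, d * w j ^ 2) = d * (w ⬝ᵥ w) := by
        rw [← Finset.mul_sum]
        congr 1
        simp [dotProduct, pow_two]
      calc x ⬝ᵥ M *ᵥ x ≤ 2 * (x ⬝ᵥ u) - (∑ j : Fin m, γ (j : ℕ) * x j ^ 2) / d := hLHS
        _ = ∑ j : Fin m, (2 * (x j * u j) - γ (j : ℕ) * x j ^ 2 / d) := hexp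
        _ ≤ ∑ j : Fin m, d * w j ^ 2 := hsum
        _ = d * (w ⬝ᵥ w) := hend
  refine specNorm_le_form_bound hSt (by positivity) (fun x => (main x).1) (fun x => ?_)
  calc x ⬝ᵥ S *ᵥ x ≤ d * (x ⬝ᵥ x) := (main x).2
    _ ≤ 4 * d ^ 3 * (x ⬝ᵥ x) := by
        have h1 : (0 : ℝ) ≤ 4 * d ^ 3 - d := by
          nlinarith [mul_nonneg (mul_nonneg (sub_nonneg.2 hd) hd0.le)
            (by linarith : (0 : ℝ) ≤ d + 1), hd0]
        have h2 : 0 ≤ (4 * d ^ 3 - d) * (x ⬝ᵥ x) := mul_nonneg h1 (fin_dot_self_nonneg x)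
        linarith

end
end

section
/- Let T ∈ G_γ^d, where the sequence γ is strictly positive, non-increasing with limit zero, summable, and γ_1 = 1. Then sup_{m∈ℕ} ‖ [∇_γ]_m^{−1/2} [T]_m [∇_γ]_m^{−1/2} ‖ ≤ d, where [∇_γ]_m is the m×m diagonal matrix with diagonal entries γ_1,…,γ_m and ‖·‖ is the spectral norm. -/
open scoped RealInnerProductSpace Classical ENNReal NNReal
open Matrix MeasureTheory

noncomputable section

variable {H : Type} [NormedAddCommGroup H] [InnerProductSpace ℝ H] [CompleteSpace H]

variable {Ω : Type}

section AuxStmt6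

lemma euclid_apply' {m : ℕ} (A : Matrix (Fin m) (Fin m) ℝ) (x : EuclideanSpace ℝ (Fin m))
    (j : Fin m) : (Matrix.toEuclideanCLM (𝕜 := ℝ) A x) j = ∑ k, A j k * x k := by
  have h := Matrix.ofLp_toEuclideanCLM (𝕜 := ℝ) A x
  have h2 := congrFun (congrArg (fun f => (f : Fin m → ℝ)) h) j
  simpa [Matrix.toLin'_apply, Matrix.mulVec, dotProduct] using h2

lemma euclid_norm_sq {m : ℕ} (x : EuclideanSpace ℝ (Fin m)) : ‖x‖ ^ 2 = ∑ j, x j ^ 2 := by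
  rw [EuclideanSpace.norm_eq, Real.sq_sqrt (by positivity)]
  simp [sq_abs]

end AuxStmt6

set_option maxHeartbeats 1000000 in
/-- Lemma B.1, (B.3): `sup_m ‖[∇_γ]_m^{-1/2} [T]_m [∇_γ]_m^{-1/2}‖ ≤ d`. -/
theorem stmt_6 (ψ : HilbertBasis ℕ ℝ H) (γ : ℕ → ℝ) (d : ℝ) (hd : 1 ≤ d)
    (hγ1 : γ 0 = 1) (hγpos : ∀ j, 0 < γ j) (hγanti : Antitone γ)
    (hγ0 : Filter.Tendsto γ Filter.atTop (nhds 0)) (hγsum : Summable γ)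
    (T : H →L[ℝ] H) (hT : memG ψ γ d T) :
    ∀ m : ℕ, 1 ≤ m →
      specNorm (Matrix.diagonal (fun j : Fin m => (Real.sqrt (γ (j : ℕ)))⁻¹) *
          opMat ψ T m *
          Matrix.diagonal (fun j : Fin m => (Real.sqrt (γ (j : ℕ)))⁻¹)) ≤ d := by
  classical
  obtain ⟨hTsym, -, -, hTb⟩ := hT
  have hd0 : (0:ℝ) < d := lt_of_lt_of_le one_pos hd
  intro m hm
  haveI : Nontrivial (EuclideanSpace ℝ (Fin m)) := by
    refine ⟨EuclideanSpace.single ⟨0, hm⟩ 1, 0, fun hcon => ?_⟩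
    have h0 := congrFun (congrArg (fun f : EuclideanSpace ℝ (Fin m) => f.ofLp) hcon) ⟨0, hm⟩
    simp at h0
  set 𝔄 := Matrix.toEuclideanCLM (𝕜 := ℝ) (n := Fin m) with h𝔄
  set D : Matrix (Fin m) (Fin m) ℝ :=
    Matrix.diagonal (fun j : Fin m => (Real.sqrt (γ (j:ℕ)))⁻¹) with hDdef
  set G : Matrix (Fin m) (Fin m) ℝ := Matrix.diagonal (fun j : Fin m => γ (j:ℕ)) with hGdef
  set Gi : Matrix (Fin m) (Fin m) ℝ :=
    Matrix.diagonal (fun j : Fin m => (γ (j:ℕ))⁻¹) with hGidef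
  set M : Matrix (Fin m) (Fin m) ℝ := opMat ψ T m with hMdef
  have hMent : ∀ j k : Fin m, M j k = ⟪ψ (j:ℕ), T (ψ (k:ℕ))⟫ := fun j k => rfl
  have hGGi : G * Gi = 1 := by
    have hcancel : ∀ j : Fin m, γ (j:ℕ) * (γ (j:ℕ))⁻¹ = 1 :=
      fun j => mul_inv_cancel₀ (hγpos _).ne'
    rw [hGdef, hGidef, Matrix.diagonal_mul_diagonal]
    simp [hcancel]
  have hDD : D * D = Gi := by
    have hss : (fun j : Fin m => (Real.sqrt (γ (j:ℕ)))⁻¹ * (Real.sqrt (γ (j:ℕ)))⁻¹)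
        = fun j : Fin m => (γ (j:ℕ))⁻¹ := by
      funext j
      rw [← mul_inv, Real.mul_self_sqrt (hγpos _).le]
    rw [hDdef, hGidef, Matrix.diagonal_mul_diagonal, hss]
  have hMsymm : ∀ j k : Fin m, M k j = M j k := by
    intro j k
    rw [hMent, hMent, ← hTsym (ψ (k:ℕ)) (ψ (j:ℕ)), real_inner_comm]
  have hstarM : star M = M := by
    ext j k
    rw [Matrix.star_apply, star_trivial, hMsymm j k]
  have hstarD : star D = D := by
    rw [hDdef, Matrix.star_eq_conjTranspose, Matrix.diagonal_conjTranspose]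
    simp
  -- key analytic estimate
  have hkey : ∀ w : EuclideanSpace ℝ (Fin m), ‖𝔄 M w‖ ≤ d * ‖𝔄 G w‖ := by
    intro w
    set h : H := ∑ k : Fin m, w k • ψ (k : ℕ) with hhdef
    have hTh : T h = ∑ k : Fin m, w k • T (ψ (k:ℕ)) := by
      rw [hhdef, map_sum]
      simp
    have hMw : ∀ j : Fin m, (𝔄 M w) j = ⟪ψ (j:ℕ), T h⟫ := by
      intro j
      rw [euclid_apply', hTh, inner_sum]
      refine Finset.sum_congr rfl (fun k _ => ?_)
      rw [real_inner_smul_right, hMent]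
      ring
    have hGw : ∀ j : Fin m, (𝔄 G w) j = γ (j:ℕ) * w j := by
      intro j
      rw [euclid_apply']
      simp [hGdef, Matrix.diagonal_apply, ite_mul]
    have horth := orthonormal_iff_ite.mp ψ.orthonormal
    have hcoef : ∀ j : ℕ, ⟪h, ψ j⟫ = if hj : j < m then w ⟨j, hj⟩ else 0 := by
      intro j
      rw [hhdef, sum_inner]
      by_cases hj : j < m
      · rw [dif_pos hj, Finset.sum_eq_single (⟨j, hj⟩ : Fin m)]
        · rw [real_inner_smul_left, horth]
          simp
        · intro k _ hk
          have hne : (k:ℕ) ≠ j := fun hc => hk (Fin.ext hc)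
          rw [real_inner_smul_left, horth]
          simp [hne]
        · simp
      · rw [dif_neg hj]
        refine Finset.sum_eq_zero (fun k _ => ?_)
        have hne : (k:ℕ) ≠ j := by omega
        rw [real_inner_smul_left, horth]
        simp [hne]
    have hts : ∑' j, γ j ^ 2 * ⟪h, ψ j⟫ ^ 2 = ∑ j ∈ Finset.range m, γ j ^ 2 * ⟪h, ψ j⟫ ^ 2 := by
      refine tsum_eq_sum (fun j hj => ?_)
      rw [hcoef j, dif_neg (by simpa using hj)]
      simp
    have hsum_eq : ∑ j ∈ Finset.range m, γ j ^ 2 * ⟪h, ψ j⟫ ^ 2 = ‖𝔄 G w‖ ^ 2 := by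
      rw [euclid_norm_sq, ← Fin.sum_univ_eq_sum_range (fun j => γ j ^ 2 * ⟪h, ψ j⟫ ^ 2)]
      refine Finset.sum_congr rfl (fun j _ => ?_)
      rw [hGw j, hcoef (j:ℕ), dif_pos j.isLt, mul_pow]
    have hbes : ∑ j : Fin m, ⟪ψ (j:ℕ), T h⟫ ^ 2 ≤ ‖T h‖ ^ 2 := by
      have hb := (ψ.orthonormal.comp ((↑) : Fin m → ℕ) Fin.val_injective).sum_inner_products_le
        (x := T h) (s := Finset.univ)
      simpa [Function.comp, Real.norm_eq_abs, sq_abs] using hb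
    have hsq : ‖𝔄 M w‖ ^ 2 ≤ (d * ‖𝔄 G w‖) ^ 2 := by
      rw [euclid_norm_sq]
      calc ∑ j, (𝔄 M w) j ^ 2 = ∑ j : Fin m, ⟪ψ (j:ℕ), T h⟫ ^ 2 :=
            Finset.sum_congr rfl (fun j _ => by rw [hMw j])
        _ ≤ ‖T h‖ ^ 2 := hbes
        _ ≤ d ^ 2 * ∑' j, γ j ^ 2 * ⟪h, ψ j⟫ ^ 2 := (hTb h).2
        _ = d ^ 2 * ‖𝔄 G w‖ ^ 2 := by rw [hts, hsum_eq]
        _ = (d * ‖𝔄 G w‖) ^ 2 := (mul_pow _ _ _).symm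
    exact (pow_le_pow_iff_left₀ (norm_nonneg _) (by positivity) two_ne_zero).mp hsq
  have hMG : ‖𝔄 (M * Gi)‖ ≤ d := by
    refine ContinuousLinearMap.opNorm_le_bound _ hd0.le (fun v => ?_)
    have h1 : 𝔄 (M * Gi) v = 𝔄 M (𝔄 Gi v) := by rw [_root_.map_mul]; rfl
    have h2 : 𝔄 G (𝔄 Gi v) = v := by
      have h3 : 𝔄 G (𝔄 Gi v) = 𝔄 (G * Gi) v := by rw [_root_.map_mul]; rfl
      rw [h3, hGGi, _root_.map_one]
      rfl
    rw [h1]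
    calc ‖𝔄 M (𝔄 Gi v)‖ ≤ d * ‖𝔄 G (𝔄 Gi v)‖ := hkey _
      _ = d * ‖v‖ := by rw [h2]
  -- power formula
  have hDDmul : ∀ X : Matrix (Fin m) (Fin m) ℝ, D * (D * X) = Gi * X := by
    intro X
    rw [← mul_assoc, hDD]
  have hpow : ∀ N : ℕ, (D * M * D) ^ (N + 1) = D * (M * Gi) ^ N * M * D := by
    intro N
    induction N with
    | zero => simp
    | succ N ih =>
      rw [pow_succ, ih, pow_succ]
      simp only [mul_assoc]
      rw [hDDmul (M * D)]
  set a := 𝔄 (D * M * D) with hadef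
  have hstarDMD : star (D * M * D) = D * M * D := by
    simp only [StarMul.star_mul, hstarD, hstarM, mul_assoc]
  have h5 : ∀ n : ℕ, ‖a ^ 2 ^ n‖₊ = ‖a‖₊ ^ 2 ^ n := by
    refine fun n => IsSelfAdjoint.nnnorm_pow_two_pow ?_ n
    have h6 : 𝔄 (star (D * M * D)) = star (𝔄 (D * M * D)) := map_star 𝔄 _
    rw [hstarDMD] at h6
    exact h6.symm
  have hbound : ∀ n : ℕ,
      ‖a‖ ^ (2 ^ n) ≤ (‖𝔄 D‖ * ‖𝔄 M‖ * ‖𝔄 D‖) * d ^ (2 ^ n) := by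
    intro n
    have hN1 : 1 ≤ 2 ^ n := Nat.one_le_two_pow
    have e1 : ‖a ^ (2 ^ n)‖ = ‖a‖ ^ (2 ^ n) := by
      calc ‖a ^ 2 ^ n‖ = ((‖a ^ 2 ^ n‖₊ : NNReal) : ℝ) := (coe_nnnorm _).symm
        _ = ((‖a‖₊ ^ 2 ^ n : NNReal) : ℝ) := by rw [h5 n]
        _ = ‖a‖ ^ 2 ^ n := by push_cast; rfl
    have e2 : (D * M * D) ^ (2 ^ n) = D * (M * Gi) ^ (2 ^ n - 1) * M * D := by
      have e3 := hpow (2 ^ n - 1)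
      rwa [Nat.sub_add_cancel hN1] at e3
    have e4 : a ^ (2 ^ n) = 𝔄 D * (𝔄 (M * Gi)) ^ (2 ^ n - 1) * 𝔄 M * 𝔄 D := by
      rw [hadef, ← _root_.map_pow, e2, _root_.map_mul, _root_.map_mul, _root_.map_mul,
        _root_.map_pow]
    have hX : ‖(𝔄 (M * Gi)) ^ (2 ^ n - 1)‖ ≤ d ^ (2 ^ n) := by
      calc ‖(𝔄 (M * Gi)) ^ (2 ^ n - 1)‖ ≤ ‖𝔄 (M * Gi)‖ ^ (2 ^ n - 1) := norm_pow_le _ _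
        _ ≤ d ^ (2 ^ n - 1) := pow_le_pow_left₀ (norm_nonneg _) hMG _
        _ ≤ d ^ (2 ^ n) := pow_le_pow_right₀ hd (Nat.sub_le _ _)
    rw [← e1, e4]
    calc ‖𝔄 D * (𝔄 (M * Gi)) ^ (2 ^ n - 1) * 𝔄 M * 𝔄 D‖
        ≤ ‖𝔄 D * (𝔄 (M * Gi)) ^ (2 ^ n - 1) * 𝔄 M‖ * ‖𝔄 D‖ := norm_mul_le _ _
      _ ≤ ‖𝔄 D * (𝔄 (M * Gi)) ^ (2 ^ n - 1)‖ * ‖𝔄 M‖ * ‖𝔄 D‖ := by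
          gcongr ?_ * ‖𝔄 D‖
          exact norm_mul_le _ _
      _ ≤ ‖𝔄 D‖ * ‖(𝔄 (M * Gi)) ^ (2 ^ n - 1)‖ * ‖𝔄 M‖ * ‖𝔄 D‖ := by
          gcongr ?_ * ‖𝔄 M‖ * ‖𝔄 D‖
          exact norm_mul_le _ _
      _ ≤ ‖𝔄 D‖ * d ^ (2 ^ n) * ‖𝔄 M‖ * ‖𝔄 D‖ := by gcongr
      _ = (‖𝔄 D‖ * ‖𝔄 M‖ * ‖𝔄 D‖) * d ^ (2 ^ n) := by ring
  -- conclude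
  unfold specNorm
  rw [← h𝔄, ← hadef]
  by_contra hcon
  push_neg at hcon
  set K := ‖𝔄 D‖ * ‖𝔄 M‖ * ‖𝔄 D‖ with hKdef
  have hr : 1 < ‖a‖ / d := (one_lt_div hd0).mpr hcon
  obtain ⟨n, hn⟩ := pow_unbounded_of_one_lt K hr
  have h1 : (‖a‖ / d) ^ n ≤ (‖a‖ / d) ^ (2 ^ n) :=
    pow_le_pow_right₀ hr.le (Nat.lt_two_pow_self (n := n)).le
  have h2 : (‖a‖ / d) ^ (2 ^ n) ≤ K := by
    rw [div_pow, div_le_iff₀ (by positivity)]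
    exact hbound n
  exact absurd (hn.trans_le (h1.trans h2)) (lt_irrefl K)


end
end
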